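/- arXiv:1603.05429 — 5 statements merged into one kernel-verified Lean document; each statement's English description precedes it below -/
import Mathlib

section
/- For all positive integers n, k and q with q ≥ ⌈n/k⌉ − 2, Waiter has a strategy in the Client-Waiter game with bias q played on the board E(K_n) guaranteeing that at the end of the game every vertex has degree at most 2k in Client's graph; in other words, S(n,q) ≤ 2k. -/
open Finset

variable {α : Type*}

/-- Auxiliary definition: `fuel` bounds the number of remaining rounds; `C` is the set of
elements claimed by Client so far; `F` is the set of free (unclaimed) elements.
`ClientCanAux q P fuel C F` says that Client can guarantee that his final claimed set
satisfies `P` in the Client-Waiter game with bias `q`: in each round Waiter offers a set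
`O` of at least one and at most `q+1` free elements, Client claims one element of `O`,
and Waiter claims the rest. -/
def ClientCanAux [DecidableEq α] (q : ℕ) (P : Finset α → Prop) :
    ℕ → Finset α → Finset α → Prop
  | 0, C, F => F = ∅ ∧ P C
  | fuel + 1, C, F =>
    if F = ∅ then P C
    else ∀ O ⊆ F, O.Nonempty → O.card ≤ q + 1 →
      ∃ x ∈ O, ClientCanAux q P fuel (insert x C) (F \ O)

/-- Client has a strategy in the Client-Waiter game with bias `q` on the board `X`
guaranteeing that the set of elements he has claimed at the end of the game satisfies `P`. -/
def ClientCanForce [DecidableEq α] (X : Finset α) (q : ℕ) (P : Finset α → Prop) : Prop :=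
  ClientCanAux q P X.card ∅ X

/-- Analogue of `ClientCanAux` for Waiter. -/
def WaiterCanAux [DecidableEq α] (q : ℕ) (P : Finset α → Prop) :
    ℕ → Finset α → Finset α → Prop
  | 0, C, F => F = ∅ ∧ P C
  | fuel + 1, C, F =>
    if F = ∅ then P C
    else ∃ O ⊆ F, O.Nonempty ∧ O.card ≤ q + 1 ∧
      ∀ x ∈ O, WaiterCanAux q P fuel (insert x C) (F \ O)

/-- Waiter has a strategy in the Client-Waiter game with bias `q` on the board `X`
guaranteeing that the set of elements claimed by Client at the end of the game
satisfies `P`. -/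
def WaiterCanForce [DecidableEq α] (X : Finset α) (q : ℕ) (P : Finset α → Prop) : Prop :=
  WaiterCanAux q P X.card ∅ X

/-- Client's graph: the graph whose edges are the edges claimed by Client. -/
def clientGraph {V : Type*} (C : Finset (Sym2 V)) : SimpleGraph V :=
  SimpleGraph.fromEdgeSet (↑C)

/-- The board for games played on `K_n`: the edge set of the complete graph on `n` vertices. -/
def Kboard (n : ℕ) : Finset (Sym2 (Fin n)) :=
  (⊤ : SimpleGraph (Fin n)).edgeFinset

/-- `G` contains a copy of `H`. -/
def ContainsCopy {W V : Type*} (H : SimpleGraph W) (G : SimpleGraph V) : Prop :=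
  ∃ f : W → V, Function.Injective f ∧ ∀ ⦃a b : W⦄, H.Adj a b → G.Adj (f a) (f b)

/-- The 2-density `d₂(H)` of a graph `H`. -/
noncomputable def twoDensity {β : Type*} (H : SimpleGraph β) : ℝ :=
  if 3 ≤ Nat.card β then ((H.edgeSet.ncard : ℝ) - 1) / ((Nat.card β : ℝ) - 2) else 0

/-- The maximum 2-density `m₂(H)` of a graph `H`. -/
noncomputable def maxTwoDensity {β : Type*} (H : SimpleGraph β) : ℝ :=
  sSup {x : ℝ | ∃ H' : H.Subgraph, 3 ≤ H'.verts.ncard ∧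
    x = ((H'.edgeSet.ncard : ℝ) - 1) / ((H'.verts.ncard : ℝ) - 2)}

/-- The maximum density `m(G)` of a graph `G`. -/
noncomputable def maxDensity {β : Type*} (G : SimpleGraph β) : ℝ :=
  sSup {x : ℝ | ∃ G' : G.Subgraph, G'.verts.Nonempty ∧
    x = (G'.edgeSet.ncard : ℝ) / (G'.verts.ncard : ℝ)}

/-- The arboricity `ar(G)` of a graph `G`. -/
noncomputable def arboricity {β : Type*} (G : SimpleGraph β) : ℝ :=
  sSup {x : ℝ | ∃ G' : G.Subgraph, 2 ≤ G'.verts.ncard ∧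
    x = (G'.edgeSet.ncard : ℝ) / ((G'.verts.ncard : ℝ) - 1)}

/-- `H` is strictly 2-balanced: every proper subgraph with at least 3 vertices has
strictly smaller 2-density. -/
def StrictlyTwoBalanced {β : Type*} (H : SimpleGraph β) : Prop :=
  ∀ H' : H.Subgraph, H' ≠ ⊤ → 3 ≤ H'.verts.ncard → twoDensity H'.coe < twoDensity H

open Classical in
/-- The probability that Client has a winning strategy in the `H`-game `CW(G_{n,p}, H, q)`,
where the random graph `G_{n,p}` is generated by keeping each edge of `K_n` independently
with probability `p`. -/
noncomputable def probClientWinsHGame {β : Type*} (H : SimpleGraph β) (q n : ℕ) (p : ℝ) : ℝ :=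
  ∑ E ∈ (Kboard n).powerset,
    p ^ E.card * (1 - p) ^ ((Kboard n).card - E.card) *
      (if ClientCanForce E q (fun C => ContainsCopy H (clientGraph C)) then 1 else 0)

/-- Vertices of the complete `k`-ary rooted tree of height `k`: a vertex at depth `i ≤ k`
is a sequence of `i` choices among `k` children. -/
abbrev TreeVert (k : ℕ) : Type := (i : Fin (k + 1)) × (Fin (i : ℕ) → Fin k)

/-- `u` is a child of `v` in the complete `k`-ary tree. -/
def IsChildOf {k : ℕ} (u v : TreeVert k) : Prop :=
  ∃ h : (u.1 : ℕ) = (v.1 : ℕ) + 1,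
    ∀ t : Fin (v.1 : ℕ), u.2 ⟨t.1, by have := t.2; omega⟩ = v.2 t

/-- The complete `k`-ary tree of height `k`, `T_{k,k}`. -/
def Tkk (k : ℕ) : SimpleGraph (TreeVert k) where
  Adj u v := IsChildOf u v ∨ IsChildOf v u
  symm := ⟨by intro u v h; tauto⟩
  loopless := ⟨by
    intro u h
    rcases h with ⟨h, _⟩ | ⟨h, _⟩ <;> omega⟩

section DegreeGame

variable {n q : ℕ}

lemma waiterCanAux_of_inv {α : Type*} [DecidableEq α] (q : ℕ) (P : Finset α → Prop)
    (I : Finset α → Finset α → Prop)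
    (hstep : ∀ C F, I C F → F ≠ ∅ →
      ∃ O ⊆ F, O.Nonempty ∧ O.card ≤ q + 1 ∧ ∀ x ∈ O, I (insert x C) (F \ O))
    (hfin : ∀ C, I C ∅ → P C) :
    ∀ fuel (C F : Finset α), F.card ≤ fuel → I C F → WaiterCanAux q P fuel C F := by
  intro fuel
  induction fuel with
  | zero =>
    intro C F hcard hI
    have hF : F = ∅ := Finset.card_eq_zero.mp (Nat.le_antisymm hcard (Nat.zero_le _))
    exact ⟨hF, hfin C (hF ▸ hI)⟩
  | succ m ih =>
    intro C F hcard hI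
    rw [WaiterCanAux]
    by_cases hF : F = ∅
    · rw [if_pos hF]
      exact hfin C (hF ▸ hI)
    · rw [if_neg hF]
      obtain ⟨O, hOF, hOne, hOcard, hx⟩ := hstep C F hI hF
      refine ⟨O, hOF, hOne, hOcard, fun x hxO => ?_⟩
      refine ih _ _ ?_ (hx x hxO)
      have h1 : (F \ O).card = F.card - O.card := Finset.card_sdiff_of_subset hOF
      have h2 : 1 ≤ O.card := Finset.card_pos.mpr hOne
      omega

/-- group of a vertex -/
def grp (q : ℕ) {n : ℕ} (v : Fin n) : ℕ := v.val / (q + 2)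

/-- part label of an edge -/
def pLab (q : ℕ) {n : ℕ} (e : Sym2 (Fin n)) : Sym2 ℕ := Sym2.map (grp q) e

/-- number of edges of `A` at `v` with part label `p` -/
def pd (q : ℕ) {n : ℕ} (A : Finset (Sym2 (Fin n))) (v : Fin n) (p : Sym2 ℕ) : ℕ :=
  (A.filter (fun e => v ∈ e ∧ pLab q e = p)).card

lemma mem_Kboard {e : Sym2 (Fin n)} : e ∈ Kboard n ↔ ¬ e.IsDiag := by
  rw [Kboard, SimpleGraph.mem_edgeFinset, SimpleGraph.edgeSet_top]
  rfl

lemma card_group (q : ℕ) (n c : ℕ) :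
    ((Finset.univ : Finset (Fin n)).filter (fun w => grp q w = c)).card ≤ q + 2 := by
  have := Finset.card_le_card_of_injOn (fun w : Fin n => w.val % (q + 2))
    (s := (Finset.univ : Finset (Fin n)).filter (fun w => grp q w = c))
    (t := Finset.range (q + 2))
    (fun a _ => Finset.mem_range.mpr (Nat.mod_lt _ (by omega)))
    ?_
  · simpa using this
  · intro a ha b hb hab
    replace ha : True ∧ a.val / (q + 2) = c := ⟨trivial, (Finset.mem_filter.mp (Finset.mem_coe.mp ha)).2⟩
    replace hb : True ∧ b.val / (q + 2) = c := ⟨trivial, (Finset.mem_filter.mp (Finset.mem_coe.mp hb)).2⟩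
    have ha2 : (q + 2) * (a.val / (q + 2)) + a.val % (q + 2) = a.val := Nat.div_add_mod _ _
    have hb2 : (q + 2) * (b.val / (q + 2)) + b.val % (q + 2) = b.val := Nat.div_add_mod _ _
    have hab' : a.val % (q + 2) = b.val % (q + 2) := hab
    apply Fin.ext
    rw [← ha2, ← hb2, ha.2, hb.2, hab']

lemma card_Kstar (q : ℕ) {n : ℕ} (v : Fin n) (p : Sym2 ℕ) :
    ((Kboard n).filter (fun e => v ∈ e ∧ pLab q e = p)).card ≤ q + 2 := by
  induction p using Sym2.ind with
  | _ i j =>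
    -- map each edge to its other endpoint
    classical
    have hsub : (Kboard n).filter (fun e => v ∈ e ∧ pLab q e = s(i, j)) ⊆
        ((Finset.univ : Finset (Fin n)).filter
          (fun w => w ≠ v ∧ s(grp q v, grp q w) = s(i, j))).image (fun w => s(v, w)) := by
      intro e he
      simp only [Finset.mem_filter] at he
      obtain ⟨heK, hve, hlab⟩ := he
      obtain ⟨w, rfl⟩ := Sym2.mem_iff_exists.mp hve
      have hwv : w ≠ v := by
        intro hEq
        exact (mem_Kboard.mp heK) (Sym2.mk_isDiag_iff.mpr hEq.symm)
      refine Finset.mem_image.mpr ⟨w, ?_, rfl⟩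
      simp only [Finset.mem_filter, Finset.mem_univ, true_and]
      refine ⟨hwv, ?_⟩
      rw [pLab, Sym2.map_pair_eq] at hlab
      exact hlab
    refine le_trans (Finset.card_le_card hsub) (le_trans Finset.card_image_le ?_)
    by_cases hi : grp q v = i
    · by_cases hj : grp q v = j
      · -- i = j = grp q v
        refine le_trans (Finset.card_le_card ?_) (card_group q n i)
        intro w hw
        simp only [Finset.mem_filter, Finset.mem_univ, true_and, Sym2.eq_iff] at hw ⊢
        rcases hw.2 with ⟨_, h2⟩ | ⟨h1, h2⟩
        · omega
        · omega
      · -- grp v = i ≠ j : other endpoint in group j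
        refine le_trans (Finset.card_le_card ?_) (card_group q n j)
        intro w hw
        simp only [Finset.mem_filter, Finset.mem_univ, true_and, Sym2.eq_iff] at hw ⊢
        rcases hw.2 with ⟨_, h2⟩ | ⟨h1, h2⟩
        · omega
        · omega
    · by_cases hj : grp q v = j
      · refine le_trans (Finset.card_le_card ?_) (card_group q n i)
        intro w hw
        simp only [Finset.mem_filter, Finset.mem_univ, true_and, Sym2.eq_iff] at hw ⊢
        rcases hw.2 with ⟨h1, h2⟩ | ⟨h1, h2⟩
        · omega
        · omega
      · have : ((Finset.univ : Finset (Fin n)).filter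
            (fun w => w ≠ v ∧ s(grp q v, grp q w) = s(i, j))) = ∅ := by
          apply Finset.filter_false_of_mem
          intro w _
          simp only [Sym2.eq_iff, not_and]
          intro _
          rintro (⟨h1, h2⟩ | ⟨h1, h2⟩) <;> omega
        rw [this]
        simp

end DegreeGame

section DegreeGame2

variable {n q : ℕ}

/-- The per-part invariant maintained by Waiter. -/
def WInv (q : ℕ) {n : ℕ} (C F : Finset (Sym2 (Fin n))) : Prop :=
  C ⊆ Kboard n ∧ F ⊆ Kboard n ∧ Disjoint C F ∧
  (∀ v p, pd q C v p ≤ 2) ∧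
  (∀ v p, 1 ≤ pd q F v p → pd q C v p ≤ 1) ∧
  (∀ (p : Sym2 ℕ) (v₁ v₂ v₃ : Fin n), v₁ ≠ v₂ → v₁ ≠ v₃ → v₂ ≠ v₃ →
    1 ≤ pd q F v₁ p → 1 ≤ pd q C v₁ p → 1 ≤ pd q F v₂ p → 1 ≤ pd q C v₂ p →
    1 ≤ pd q F v₃ p → 1 ≤ pd q C v₃ p → False) ∧
  (∀ (p : Sym2 ℕ) (v₁ v₂ : Fin n), v₁ ≠ v₂ →
    1 ≤ pd q F v₁ p → 1 ≤ pd q C v₁ p → 1 ≤ pd q F v₂ p → 1 ≤ pd q C v₂ p →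
    pd q F v₁ p = 1 ∨ pd q F v₂ p = 1)

lemma pd_le_of_subset {A B : Finset (Sym2 (Fin n))} (h : A ⊆ B) (v : Fin n) (p : Sym2 ℕ) :
    pd q A v p ≤ pd q B v p :=
  Finset.card_le_card (Finset.filter_subset_filter _ h)

lemma one_le_pd {A : Finset (Sym2 (Fin n))} {x : Sym2 (Fin n)} {v : Fin n} {p : Sym2 ℕ}
    (hx : x ∈ A) (hv : v ∈ x) (hp : pLab q x = p) : 1 ≤ pd q A v p :=
  Finset.card_pos.mpr ⟨x, Finset.mem_filter.mpr ⟨hx, hv, hp⟩⟩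

lemma pd_insert_of {C : Finset (Sym2 (Fin n))} {x : Sym2 (Fin n)} {v : Fin n} {p : Sym2 ℕ}
    (hx : x ∉ C) (hv : v ∈ x) (hp : pLab q x = p) :
    pd q (insert x C) v p = pd q C v p + 1 := by
  rw [pd, Finset.filter_insert, if_pos ⟨hv, hp⟩,
    Finset.card_insert_of_notMem (fun hmem => hx (Finset.mem_of_mem_filter x hmem))]
  rfl

lemma pd_insert_not {C : Finset (Sym2 (Fin n))} {x : Sym2 (Fin n)} {v : Fin n} {p : Sym2 ℕ}
    (h : ¬(v ∈ x ∧ pLab q x = p)) :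
    pd q (insert x C) v p = pd q C v p := by
  rw [pd, Finset.filter_insert, if_neg h]
  rfl

lemma pd_sdiff_le {F O : Finset (Sym2 (Fin n))} (v : Fin n) (p : Sym2 ℕ) :
    pd q (F \ O) v p ≤ pd q F v p :=
  pd_le_of_subset (Finset.sdiff_subset) v p

lemma pd_sdiff_other {F O : Finset (Sym2 (Fin n))} {p : Sym2 ℕ}
    (hO : ∀ e ∈ O, pLab q e = p) {r : Sym2 ℕ} (hr : r ≠ p) (v : Fin n) :
    pd q (F \ O) v r = pd q F v r := by
  rw [pd, pd]
  congr 1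
  ext e
  simp only [Finset.mem_filter, Finset.mem_sdiff]
  constructor
  · rintro ⟨⟨h1, _⟩, h3⟩; exact ⟨h1, h3⟩
  · rintro ⟨h1, h3⟩
    refine ⟨⟨h1, fun hmem => ?_⟩, h3⟩
    exact hr (h3.2 ▸ hO e hmem)

lemma pd_sdiff_zero {F O : Finset (Sym2 (Fin n))} {v : Fin n} {p : Sym2 ℕ}
    (h : F.filter (fun e => v ∈ e ∧ pLab q e = p) ⊆ O) :
    pd q (F \ O) v p = 0 := by
  rw [pd, Finset.card_eq_zero]
  apply Finset.eq_empty_of_forall_notMem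
  intro e he
  rw [Finset.mem_filter, Finset.mem_sdiff] at he
  exact he.1.2 (h (Finset.mem_filter.mpr ⟨he.1.1, he.2⟩))

lemma pd_add_pd_le {C F : Finset (Sym2 (Fin n))} (hC : C ⊆ Kboard n) (hF : F ⊆ Kboard n)
    (hd : Disjoint C F) (v : Fin n) (p : Sym2 ℕ) :
    pd q C v p + pd q F v p ≤ q + 2 := by
  classical
  have hdisj : Disjoint (C.filter (fun e => v ∈ e ∧ pLab q e = p))
      (F.filter (fun e => v ∈ e ∧ pLab q e = p)) :=
    Finset.disjoint_filter_filter hd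
  have hsub : (C.filter (fun e => v ∈ e ∧ pLab q e = p)) ∪
      (F.filter (fun e => v ∈ e ∧ pLab q e = p)) ⊆
      (Kboard n).filter (fun e => v ∈ e ∧ pLab q e = p) := by
    apply Finset.union_subset <;> exact Finset.filter_subset_filter _ (by assumption)
  calc pd q C v p + pd q F v p
      = ((C.filter (fun e => v ∈ e ∧ pLab q e = p)) ∪
        (F.filter (fun e => v ∈ e ∧ pLab q e = p))).card := (Finset.card_union_of_disjoint hdisj).symm
    _ ≤ ((Kboard n).filter (fun e => v ∈ e ∧ pLab q e = p)).card := Finset.card_le_card hsub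
    _ ≤ q + 2 := card_Kstar q v p

lemma inv_step (C F : Finset (Sym2 (Fin n))) (hI : WInv q C F) (hFne : F ≠ ∅) :
    ∃ O ⊆ F, O.Nonempty ∧ O.card ≤ q + 1 ∧ ∀ x ∈ O, WInv q (insert x C) (F \ O) := by
  classical
  obtain ⟨hCK, hFK, hdisj, hI2, hI1, hI3, hI4⟩ := hI
  obtain ⟨e₀, he₀⟩ := Finset.nonempty_iff_ne_empty.mpr hFne
  set p := pLab q e₀ with hp
  by_cases hHot : ∃ y, 1 ≤ pd q F y p ∧ 1 ≤ pd q C y p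
  · -- CASE HOT: attack a suitable hot vertex y
    have hy : ∃ y, (1 ≤ pd q F y p ∧ 1 ≤ pd q C y p) ∧
        ∀ z, z ≠ y → 1 ≤ pd q F z p → 1 ≤ pd q C z p → pd q F z p = 1 := by
      by_cases hex : ∃ u, (1 ≤ pd q F u p ∧ 1 ≤ pd q C u p) ∧ 2 ≤ pd q F u p
      · obtain ⟨u, hu, hu2⟩ := hex
        refine ⟨u, hu, fun z hz hzF hzC => ?_⟩
        rcases hI4 p z u hz hzF hzC hu.1 hu.2 with h | h
        · exact h
        · omega
      · obtain ⟨y, hy⟩ := hHot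
        refine ⟨y, hy, fun z _ hzF hzC => ?_⟩
        have : ¬ 2 ≤ pd q F z p := fun h2 => hex ⟨z, ⟨hzF, hzC⟩, h2⟩
        omega
    obtain ⟨y, ⟨hyF, hyC⟩, hyProp⟩ := hy
    set O := F.filter (fun e => y ∈ e ∧ pLab q e = p) with hO
    have hOF : O ⊆ F := Finset.filter_subset _ _
    have hOlab : ∀ e ∈ O, pLab q e = p := fun e he => (Finset.mem_filter.mp he).2.2
    have hOcardEq : O.card = pd q F y p := rfl
    refine ⟨O, hOF, Finset.card_pos.mp (by omega), ?_, ?_⟩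
    · have := pd_add_pd_le (q := q) hCK hFK hdisj y p
      omega
    intro x hxO
    have hxF : x ∈ F := hOF hxO
    have hyx : y ∈ x := (Finset.mem_filter.mp hxO).2.1
    have hxlab : pLab q x = p := (Finset.mem_filter.mp hxO).2.2
    have hxC : x ∉ C := fun hc => (Finset.disjoint_left.mp hdisj hc) hxF
    obtain ⟨b, hxeq⟩ := Sym2.mem_iff_exists.mp hyx
    have hby : b ≠ y := by
      intro hEq
      apply mem_Kboard.mp (hFK hxF)
      rw [hxeq, Sym2.mk_isDiag_iff]
      exact hEq.symm
    have hmemx : ∀ v : Fin n, v ∈ x ↔ v = y ∨ v = b := by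
      intro v; rw [hxeq, Sym2.mem_iff]
    -- key free-degree computations
    have hF'le : ∀ v r, pd q (F \ O) v r ≤ pd q F v r := fun v r => pd_sdiff_le v r
    have hF'other : ∀ (v) (r : Sym2 ℕ), r ≠ p → pd q (F \ O) v r = pd q F v r :=
      fun v r hr => pd_sdiff_other hOlab hr v
    have hF'y : pd q (F \ O) y p = 0 := pd_sdiff_zero (by rw [hO])
    have hF'one : ∀ v, v ∈ x → pd q F v p = 1 → pd q (F \ O) v p = 0 := by
      intro v hvx h1
      apply pd_sdiff_zero
      intro e he
      have hxmem : x ∈ F.filter (fun e => v ∈ e ∧ pLab q e = p) :=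
        Finset.mem_filter.mpr ⟨hxF, hvx, hxlab⟩
      have h1' : (F.filter (fun e => v ∈ e ∧ pLab q e = p)).card = 1 := h1
      obtain ⟨c, hc⟩ := Finset.card_eq_one.mp h1'
      rw [hc, Finset.mem_singleton] at he hxmem
      rw [he, ← hxmem]
      exact hxO
    -- the new invariant
    have hCK' : insert x C ⊆ Kboard n := Finset.insert_subset (hFK hxF) hCK
    have hFK' : F \ O ⊆ Kboard n := Finset.Subset.trans (Finset.sdiff_subset) hFK
    have hdisj' : Disjoint (insert x C) (F \ O) := by
      rw [Finset.disjoint_left]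
      intro a ha haF'
      rcases Finset.mem_insert.mp ha with rfl | haC
      · exact (Finset.mem_sdiff.mp haF').2 hxO
      · exact (Finset.disjoint_left.mp hdisj haC) ((Finset.mem_sdiff.mp haF').1)
    refine ⟨hCK', hFK', hdisj', ?_, ?_, ?_, ?_⟩
    · -- I2 : client pair-degrees ≤ 2
      intro v r
      by_cases hc : v ∈ x ∧ pLab q x = r
      · have hrp : r = p := hc.2 ▸ hxlab.symm ▸ rfl
        subst hrp
        rw [pd_insert_of hxC hc.1 hc.2]
        have h1 : 1 ≤ pd q F v p := one_le_pd hxF hc.1 hxlab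
        have := hI1 v p h1
        omega
      · rw [pd_insert_not hc]; exact hI2 v r
    · -- I1 : open vertices have client pair-degree ≤ 1
      intro v r h1
      by_cases hc : v ∈ x ∧ pLab q x = r
      · have hrp : r = p := by rw [← hc.2, hxlab]
        subst hrp
        rcases (hmemx v).mp hc.1 with hveq | hveq
        · rw [hveq, hF'y] at h1; omega
        · -- v = b
          rw [pd_insert_of hxC hc.1 hc.2]
          by_contra hcon
          have hbC : 1 ≤ pd q C v p := by omega
          have hbF : 1 ≤ pd q F v p := one_le_pd hxF hc.1 hxlab
          have hvy : v ≠ y := by rw [hveq]; exact hby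
          have hb1 : pd q F v p = 1 := hyProp v hvy hbF hbC
          rw [hF'one v hc.1 hb1] at h1
          omega
      · rw [pd_insert_not hc]
        exact hI1 v r (le_trans h1 (pd_sdiff_le v r))
    · -- I3 : no three hot vertices
      intro r v₁ v₂ v₃ h12 h13 h23 hF1 hC1 hF2 hC2 hF3 hC3
      by_cases hrp : r = p
      · subst hrp
        have hclass : ∀ v, 1 ≤ pd q (F \ O) v p → 1 ≤ pd q (insert x C) v p →
            v ≠ y ∧ (v = b ∨ (1 ≤ pd q F v p ∧ 1 ≤ pd q C v p)) := by
          intro v hvF hvC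
          have hvy : v ≠ y := by rintro rfl; rw [hF'y] at hvF; omega
          refine ⟨hvy, ?_⟩
          by_cases hvb : v = b
          · exact Or.inl hvb
          · right
            have hnx : ¬(v ∈ x ∧ pLab q x = p) := by
              rintro ⟨hvx, -⟩
              rcases (hmemx v).mp hvx with hveq | hveq
              · exact hvy hveq
              · exact hvb hveq
            rw [pd_insert_not hnx] at hvC
            exact ⟨le_trans hvF (pd_sdiff_le v p), hvC⟩
        obtain ⟨h1y, h1c⟩ := hclass v₁ hF1 hC1
        obtain ⟨h2y, h2c⟩ := hclass v₂ hF2 hC2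
        obtain ⟨h3y, h3c⟩ := hclass v₃ hF3 hC3
        rcases h1c with h1b | ⟨h1F, h1C⟩
        · rcases h2c with h2b | ⟨h2F, h2C⟩
          · exact h12 (h1b.trans h2b.symm)
          · rcases h3c with h3b | ⟨h3F, h3C⟩
            · exact h13 (h1b.trans h3b.symm)
            · exact hI3 p v₂ v₃ y h23 h2y h3y h2F h2C h3F h3C hyF hyC
        · rcases h2c with h2b | ⟨h2F, h2C⟩
          · rcases h3c with h3b | ⟨h3F, h3C⟩
            · exact h23 (h2b.trans h3b.symm)
            · exact hI3 p v₁ v₃ y h13 h1y h3y h1F h1C h3F h3C hyF hyC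
          · exact hI3 p v₁ v₂ y h12 h1y h2y h1F h1C h2F h2C hyF hyC
      · have hnx : ∀ v : Fin n, ¬(v ∈ x ∧ pLab q x = r) := by
          rintro v ⟨-, hl⟩; exact hrp (by rw [← hl, hxlab])
        rw [hF'other _ r hrp] at hF1 hF2 hF3
        rw [pd_insert_not (hnx v₁)] at hC1
        rw [pd_insert_not (hnx v₂)] at hC2
        rw [pd_insert_not (hnx v₃)] at hC3
        exact hI3 r v₁ v₂ v₃ h12 h13 h23 hF1 hC1 hF2 hC2 hF3 hC3
    · -- I4 : if two hot vertices, one has a single free edge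
      intro r v₁ v₂ h12 hF1 hC1 hF2 hC2
      by_cases hrp : r = p
      · subst hrp
        have hclass : ∀ v, 1 ≤ pd q (F \ O) v p → 1 ≤ pd q (insert x C) v p →
            v ≠ y ∧ (v = b ∨ (1 ≤ pd q F v p ∧ 1 ≤ pd q C v p)) := by
          intro v hvF hvC
          have hvy : v ≠ y := by rintro rfl; rw [hF'y] at hvF; omega
          refine ⟨hvy, ?_⟩
          by_cases hvb : v = b
          · exact Or.inl hvb
          · right
            have hnx : ¬(v ∈ x ∧ pLab q x = p) := by
              rintro ⟨hvx, -⟩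
              rcases (hmemx v).mp hvx with hveq | hveq
              · exact hvy hveq
              · exact hvb hveq
            rw [pd_insert_not hnx] at hvC
            exact ⟨le_trans hvF (pd_sdiff_le v p), hvC⟩
        obtain ⟨h1y, h1c⟩ := hclass v₁ hF1 hC1
        obtain ⟨h2y, h2c⟩ := hclass v₂ hF2 hC2
        rcases h1c with h1b | ⟨h1F, h1C⟩
        · rcases h2c with h2b | ⟨h2F, h2C⟩
          · exact absurd (h1b.trans h2b.symm) h12
          · -- v₁ = b, v₂ old-hot ≠ y: its old free degree is 1
            right
            have := hyProp v₂ h2y h2F h2C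
            have := hF'le v₂ p
            omega
        · rcases h2c with h2b | ⟨h2F, h2C⟩
          · left
            have := hyProp v₁ h1y h1F h1C
            have := hF'le v₁ p
            omega
          · exact absurd (hI3 p v₁ v₂ y h12 h1y h2y h1F h1C h2F h2C hyF hyC) not_false
      · have hnx : ∀ v : Fin n, ¬(v ∈ x ∧ pLab q x = r) := by
          rintro v ⟨-, hl⟩; exact hrp (by rw [← hl, hxlab])
        rw [hF'other _ r hrp] at hF1 hF2
        rw [pd_insert_not (hnx v₁)] at hC1
        rw [pd_insert_not (hnx v₂)] at hC2
        rw [hF'other _ r hrp, hF'other _ r hrp]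
        exact hI4 r v₁ v₂ h12 hF1 hC1 hF2 hC2
  · -- CASE NO HOT: open a default star
    push_neg at hHot
    obtain ⟨a, ha⟩ : ∃ a, a ∈ e₀ := ⟨e₀.out.1, Sym2.out_fst_mem e₀⟩
    set S := F.filter (fun e => a ∈ e ∧ pLab q e = p) with hS
    have hSF : S ⊆ F := Finset.filter_subset _ _
    have hScardEq : S.card = pd q F a p := rfl
    have hSne : 1 ≤ S.card := by
      rw [hScardEq]; exact one_le_pd he₀ ha rfl
    have hSle : S.card ≤ q + 2 := by
      rw [hScardEq]
      exact le_trans (pd_le_of_subset hFK a p) (card_Kstar q a p)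
    have hnohot : ∀ v, 1 ≤ pd q F v p → pd q C v p = 0 := by
      intro v hv
      have := hHot v hv
      omega
    -- choose the offered set
    obtain ⟨O, hOS, hOne, hOcard, hOleft⟩ :
        ∃ O ⊆ S, O.Nonempty ∧ O.card ≤ q + 1 ∧ S.card - O.card ≤ 1 := by
      by_cases hbig : S.card ≤ q + 1
      · exact ⟨S, Finset.Subset.refl _, Finset.card_pos.mp hSne, hbig, by omega⟩
      · have he₀S : e₀ ∈ S := by rw [hS]; exact Finset.mem_filter.mpr ⟨he₀, ha, rfl⟩
        refine ⟨S.erase e₀, Finset.erase_subset _ _, ?_, ?_, ?_⟩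
        · rw [← Finset.card_pos, Finset.card_erase_of_mem he₀S]
          omega
        · rw [Finset.card_erase_of_mem he₀S]
          omega
        · rw [Finset.card_erase_of_mem he₀S]
          omega
    have hOF : O ⊆ F := Finset.Subset.trans hOS hSF
    have hOlab : ∀ e ∈ O, pLab q e = p := fun e he => (Finset.mem_filter.mp (hOS he)).2.2
    refine ⟨O, hOF, hOne, hOcard, ?_⟩
    intro x hxO
    have hxS : x ∈ S := hOS hxO
    have hxF : x ∈ F := hSF hxS
    have hax : a ∈ x := (Finset.mem_filter.mp hxS).2.1
    have hxlab : pLab q x = p := (Finset.mem_filter.mp hxS).2.2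
    have hxC : x ∉ C := fun hc => (Finset.disjoint_left.mp hdisj hc) hxF
    obtain ⟨b, hxeq⟩ := Sym2.mem_iff_exists.mp hax
    have hba : b ≠ a := by
      intro hEq
      apply mem_Kboard.mp (hFK hxF)
      rw [hxeq, Sym2.mk_isDiag_iff]
      exact hEq.symm
    have hmemx : ∀ v : Fin n, v ∈ x ↔ v = a ∨ v = b := by
      intro v; rw [hxeq, Sym2.mem_iff]
    have hF'a : pd q (F \ O) a p ≤ 1 := by
      have heq : (F \ O).filter (fun e => a ∈ e ∧ pLab q e = p) = S \ O := by
        ext e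
        simp only [hS, Finset.mem_filter, Finset.mem_sdiff]
        tauto
      rw [pd, heq, Finset.card_sdiff_of_subset hOS]
      omega
    have hF'other : ∀ (v) (r : Sym2 ℕ), r ≠ p → pd q (F \ O) v r = pd q F v r :=
      fun v r hr => pd_sdiff_other hOlab hr v
    have hCK' : insert x C ⊆ Kboard n := Finset.insert_subset (hFK hxF) hCK
    have hFK' : F \ O ⊆ Kboard n := Finset.Subset.trans (Finset.sdiff_subset) hFK
    have hdisj' : Disjoint (insert x C) (F \ O) := by
      rw [Finset.disjoint_left]
      intro c hc hcF'
      rcases Finset.mem_insert.mp hc with rfl | hcC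
      · exact (Finset.mem_sdiff.mp hcF').2 hxO
      · exact (Finset.disjoint_left.mp hdisj hcC) ((Finset.mem_sdiff.mp hcF').1)
    have hclass : ∀ v, 1 ≤ pd q (F \ O) v p → 1 ≤ pd q (insert x C) v p →
        v = a ∨ v = b := by
      intro v hvF hvC
      by_contra hcon
      push_neg at hcon
      have hnx : ¬(v ∈ x ∧ pLab q x = p) := by
        rintro ⟨hvx, -⟩
        rcases (hmemx v).mp hvx with hveq | hveq
        · exact hcon.1 hveq
        · exact hcon.2 hveq
      rw [pd_insert_not hnx] at hvC
      have := hnohot v (le_trans hvF (pd_sdiff_le v p))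
      omega
    refine ⟨hCK', hFK', hdisj', ?_, ?_, ?_, ?_⟩
    · intro v r
      by_cases hc : v ∈ x ∧ pLab q x = r
      · have hrp : r = p := by rw [← hc.2, hxlab]
        subst hrp
        rw [pd_insert_of hxC hc.1 hc.2]
        have := hnohot v (one_le_pd hxF hc.1 hxlab)
        omega
      · rw [pd_insert_not hc]; exact hI2 v r
    · intro v r h1
      by_cases hc : v ∈ x ∧ pLab q x = r
      · have hrp : r = p := by rw [← hc.2, hxlab]
        subst hrp
        rw [pd_insert_of hxC hc.1 hc.2]
        have := hnohot v (one_le_pd hxF hc.1 hxlab)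
        omega
      · rw [pd_insert_not hc]
        exact hI1 v r (le_trans h1 (pd_sdiff_le v r))
    · intro r v₁ v₂ v₃ h12 h13 h23 hF1 hC1 hF2 hC2 hF3 hC3
      by_cases hrp : r = p
      · subst hrp
        have c1 := hclass v₁ hF1 hC1
        have c2 := hclass v₂ hF2 hC2
        have c3 := hclass v₃ hF3 hC3
        rcases c1 with h1 | h1 <;> rcases c2 with h2 | h2 <;> rcases c3 with h3 | h3 <;>
          first
            | exact h12 (h1.trans h2.symm)
            | exact h13 (h1.trans h3.symm)
            | exact h23 (h2.trans h3.symm)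
      · have hnx : ∀ v : Fin n, ¬(v ∈ x ∧ pLab q x = r) := by
          rintro v ⟨-, hl⟩; exact hrp (by rw [← hl, hxlab])
        rw [hF'other _ r hrp] at hF1 hF2 hF3
        rw [pd_insert_not (hnx v₁)] at hC1
        rw [pd_insert_not (hnx v₂)] at hC2
        rw [pd_insert_not (hnx v₃)] at hC3
        exact hI3 r v₁ v₂ v₃ h12 h13 h23 hF1 hC1 hF2 hC2 hF3 hC3
    · intro r v₁ v₂ h12 hF1 hC1 hF2 hC2
      by_cases hrp : r = p
      · subst hrp
        have c1 := hclass v₁ hF1 hC1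
        have c2 := hclass v₂ hF2 hC2
        rcases c1 with h1 | h1
        · left
          rw [h1] at hF1 ⊢
          omega
        · rcases c2 with h2 | h2
          · right
            rw [h2] at hF2 ⊢
            omega
          · exact absurd (h1.trans h2.symm) h12
      · have hnx : ∀ v : Fin n, ¬(v ∈ x ∧ pLab q x = r) := by
          rintro v ⟨-, hl⟩; exact hrp (by rw [← hl, hxlab])
        rw [hF'other _ r hrp] at hF1 hF2
        rw [pd_insert_not (hnx v₁)] at hC1
        rw [pd_insert_not (hnx v₂)] at hC2
        rw [hF'other _ r hrp, hF'other _ r hrp]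
        exact hI4 r v₁ v₂ h12 hF1 hC1 hF2 hC2

end DegreeGame2

section DegreeGame3

variable {n q : ℕ}

lemma degree_bound {k : ℕ} (C : Finset (Sym2 (Fin n)))
    (h2 : ∀ v p, pd q C v p ≤ 2) (hnk : n ≤ k * (q + 2)) (v : Fin n) :
    ((clientGraph C).neighborSet v).ncard ≤ 2 * k := by
  classical
  have hset : (clientGraph C).neighborSet v =
      ↑((Finset.univ : Finset (Fin n)).filter (fun w => s(v, w) ∈ C ∧ v ≠ w)) := by
    ext w
    simp [clientGraph, SimpleGraph.mem_neighborSet, SimpleGraph.fromEdgeSet_adj]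
  rw [hset, Set.ncard_coe_finset]
  set NF := (Finset.univ : Finset (Fin n)).filter (fun w => s(v, w) ∈ C ∧ v ≠ w) with hNF
  have hcover : NF ⊆ (Finset.range k).biUnion (fun j => NF.filter (fun w => grp q w = j)) := by
    intro w hw
    refine Finset.mem_biUnion.mpr ⟨grp q w, Finset.mem_range.mpr ?_, Finset.mem_filter.mpr ⟨hw, rfl⟩⟩
    have hwn : w.val < n := w.2
    have : w.val < k * (q + 2) := by omega
    exact (Nat.div_lt_iff_lt_mul (by omega)).mpr (by omega)
  have hone : ∀ j, (NF.filter (fun w => grp q w = j)).card ≤ pd q C v (s(grp q v, j)) := by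
    intro j
    apply Finset.card_le_card_of_injOn (fun w => s(v, w))
    · intro w hw
      simp only [hNF, Finset.mem_coe, Finset.mem_filter, Finset.mem_univ, true_and] at hw
      refine Finset.mem_filter.mpr ⟨hw.1.1, Sym2.mem_iff.mpr (Or.inl rfl), ?_⟩
      rw [pLab, Sym2.map_pair_eq, hw.2]
    · intro w1 _ w2 _ hEq
      exact Sym2.congr_right.mp hEq
  calc NF.card ≤ ∑ j ∈ Finset.range k, (NF.filter (fun w => grp q w = j)).card :=
        le_trans (Finset.card_le_card hcover) Finset.card_biUnion_le
    _ ≤ ∑ _j ∈ Finset.range k, 2 :=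
        Finset.sum_le_sum (fun j _ => le_trans (hone j) (h2 v _))
    _ = 2 * k := by simp [mul_comm]

lemma winv_init : WInv q (∅ : Finset (Sym2 (Fin n))) (Kboard n) := by
  have hzero : ∀ (v : Fin n) (p : Sym2 ℕ), pd q (∅ : Finset (Sym2 (Fin n))) v p = 0 := by
    intro v p
    simp [pd]
  refine ⟨Finset.empty_subset _, Finset.Subset.refl _, Finset.disjoint_empty_left _,
    ?_, ?_, ?_, ?_⟩
  · intro v p; rw [hzero]; omega
  · intro v p _; rw [hzero]; omega
  · intro p v₁ v₂ v₃ _ _ _ _ hC1 _ _ _ _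
    rw [hzero] at hC1; omega
  · intro p v₁ v₂ _ _ hC1 _ _
    rw [hzero] at hC1; omega

end DegreeGame3

/-- Proposition 1 (upper bound): if `q ≥ ⌈n/k⌉ - 2` then `S(n,q) ≤ 2k`: Waiter can ensure
that every vertex of Client's final graph has degree at most `2k`. -/
theorem stmt0 (n k q : ℕ) (hn : 0 < n) (hk : 0 < k) (hq : 0 < q)
    (h : (⌈(n : ℚ) / (k : ℚ)⌉ - 2 : ℤ) ≤ (q : ℤ)) :
    WaiterCanForce (Kboard n) q
      (fun C => ∀ v : Fin n, ((clientGraph C).neighborSet v).ncard ≤ 2 * k) := by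
  classical
  have hnk : n ≤ k * (q + 2) := by
    have h1 : (⌈(n : ℚ) / (k : ℚ)⌉ : ℤ) ≤ (q : ℤ) + 2 := by omega
    have h2 : ((n : ℚ) / (k : ℚ)) ≤ ((q : ℚ) + 2) := by
      refine le_trans (Int.le_ceil _) ?_
      have : ((⌈(n : ℚ) / (k : ℚ)⌉ : ℤ) : ℚ) ≤ (((q : ℤ) + 2 : ℤ) : ℚ) := by exact_mod_cast h1
      simpa using this
    have hk0 : (0 : ℚ) < (k : ℚ) := by exact_mod_cast hk
    rw [div_le_iff₀ hk0] at h2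
    have h3 : (n : ℚ) ≤ ((k * (q + 2) : ℕ) : ℚ) := by push_cast; linarith
    exact_mod_cast h3
  apply waiterCanAux_of_inv q _ (WInv q)
  · intro C F hI hF
    exact inv_step C F hI hF
  · intro C hI v
    exact degree_bound C hI.2.2.2.1 hnk v
  · exact le_rfl
  · exact winv_init
end

section
/- For all positive integers n, k and q with k ≥ 2 and q < (n−1)/(k−1) − 1, Client has a strategy in the Client-Waiter game with bias q played on the board E(K_n) guaranteeing that at the end of the game his graph contains a vertex of degree at least k; in other words, S(n,q) ≥ k. -/
open Finset

variable {α : Type*}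

/-- Key induction: any strategy of Client guarantees that his final set `S` satisfies
`C ⊆ S ⊆ C ∪ F` and `F.card + (q+1)*C.card ≤ (q+1)*S.card`. -/
lemma clientCanAux_of_count [DecidableEq α] (q : ℕ) (P : Finset α → Prop) :
    ∀ (fuel : ℕ) (C F : Finset α), F.card ≤ fuel → Disjoint C F →
    (∀ S : Finset α, C ⊆ S → S ⊆ C ∪ F → F.card + (q+1)*C.card ≤ (q+1)*S.card → P S) →
    ClientCanAux q P fuel C F := by
  intro fuel
  induction fuel with
  | zero =>
    intro C F hcard _ hP
    have hF : F = ∅ := Finset.card_eq_zero.mp (Nat.le_zero.mp hcard)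
    refine ⟨hF, hP C le_rfl (by simp) (by simp [hF])⟩
  | succ m ih =>
    intro C F hcard hdisj hP
    show ClientCanAux q P (m+1) C F
    rw [ClientCanAux]
    by_cases hF : F = ∅
    · simp only [hF, if_true]
      exact hP C le_rfl (by simp) (by simp [hF])
    · simp only [hF, if_false]
      intro O hOF hOne hOcard
      obtain ⟨x, hx⟩ := hOne
      refine ⟨x, hx, ih (insert x C) (F \ O) ?_ ?_ ?_⟩
      · have h1 : (F \ O).card = F.card - O.card := Finset.card_sdiff_of_subset hOF
        have h2 : 1 ≤ O.card := Finset.card_pos.mpr ⟨x, hx⟩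
        omega
      · refine Finset.disjoint_left.mpr ?_
        intro a ha hb
        rcases Finset.mem_insert.mp ha with rfl | ha'
        · exact (Finset.mem_sdiff.mp hb).2 hx
        · exact (Finset.disjoint_left.mp hdisj ha') (Finset.mem_sdiff.mp hb).1
      · intro S hCS hSCF hcount
        refine hP S (le_trans (Finset.subset_insert x C) hCS) ?_ ?_
        · intro a ha
          rcases Finset.mem_union.mp (hSCF ha) with ha' | ha'
          · rcases Finset.mem_insert.mp ha' with rfl | h'
            · exact Finset.mem_union_right _ (hOF hx)
            · exact Finset.mem_union_left _ h'
          · exact Finset.mem_union_right _ (Finset.mem_sdiff.mp ha').1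
        · have hxC : x ∉ C := Finset.disjoint_right.mp hdisj (hOF hx)
          have h1 : (insert x C).card = C.card + 1 := Finset.card_insert_of_notMem hxC
          have h2 : (F \ O).card = F.card - O.card := Finset.card_sdiff_of_subset hOF
          have h3 : O.card ≤ F.card := Finset.card_le_card hOF
          rw [h1, h2] at hcount
          have hm : (q+1)*(C.card+1) = (q+1)*C.card + (q+1) := by ring
          omega

lemma kboard_card (n : ℕ) : 2 * (Kboard n).card = n * (n - 1) := by
  have h1 : (Kboard n).card = (Fintype.card (Fin n)).choose 2 := by
    simpa [Kboard] using SimpleGraph.card_edgeFinset_top_eq_card_choose_two (V := Fin n)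
  rw [h1, Fintype.card_fin, Nat.choose_two_right]
  have : 2 ∣ n * (n - 1) := by
    rcases Nat.even_or_odd n with he | ho
    · exact Dvd.dvd.mul_right he.two_dvd _
    · rcases n with _ | m
      · simp
      · exact Dvd.dvd.mul_left (Nat.Odd.sub_odd ho odd_one).two_dvd _
  exact Nat.mul_div_cancel' this

/-- Counting: if `S ⊆ Kboard n` has many edges then some vertex has degree ≥ k. -/
lemma degree_of_many_edges (n k q : ℕ) (hn4 : 4 ≤ n) (hk : 2 ≤ k)
    (hA : (q+1)*(k-1) ≤ n - 2)
    (S : Finset (Sym2 (Fin n))) (hSK : S ⊆ Kboard n)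
    (hbig : (Kboard n).card ≤ (q+1) * S.card) :
    ∃ v : Fin n, k ≤ ((clientGraph S).neighborSet v).ncard := by
  by_contra hcon
  push_neg at hcon
  classical
  set G : SimpleGraph (Fin n) := clientGraph S with hG
  letI : DecidableRel G.Adj := Classical.decRel _
  have hedge : G.edgeSet = ↑S := by
    rw [hG, clientGraph, SimpleGraph.edgeSet_fromEdgeSet]
    ext e
    simp only [Set.mem_diff, Set.mem_setOf_eq, Finset.mem_coe]
    constructor
    · exact fun h => h.1
    · intro he
      refine ⟨he, ?_⟩
      have : e ∈ (⊤ : SimpleGraph (Fin n)).edgeSet := by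
        have := hSK he
        simpa [Kboard, SimpleGraph.mem_edgeFinset] using this
      exact SimpleGraph.not_isDiag_of_mem_edgeSet _ this
  have hEF : G.edgeFinset = S := by
    simp [SimpleGraph.edgeFinset, hedge]
  have hdeg : ∀ v : Fin n, G.degree v ≤ k - 1 := by
    intro v
    have h1 : ((G.neighborSet v).ncard : ℕ) = G.degree v := by
      rw [Set.ncard_eq_toFinset_card']
      rfl
    have := hcon v
    omega
  have hsum : ∑ v : Fin n, G.degree v = 2 * G.edgeFinset.card :=
    SimpleGraph.sum_degrees_eq_twice_card_edges G
  have hsum2 : 2 * S.card ≤ n * (k - 1) := by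
    rw [← hEF, ← hsum]
    calc ∑ v : Fin n, G.degree v ≤ ∑ _v : Fin n, (k-1) := Finset.sum_le_sum (fun v _ => hdeg v)
    _ = n * (k-1) := by simp [Finset.sum_const, Finset.card_univ]
  -- now derive contradiction
  have h1 : n * (n-1) ≤ 2 * (q+1) * S.card := by
    rw [← kboard_card n]
    calc 2 * (Kboard n).card ≤ 2 * ((q+1) * S.card) := Nat.mul_le_mul_left 2 hbig
    _ = 2 * (q+1) * S.card := by ring
  have h2 : 2 * (q+1) * S.card ≤ (q+1) * (n * (k-1)) := by
    calc 2 * (q+1) * S.card = (q+1) * (2 * S.card) := by ring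
    _ ≤ (q+1) * (n * (k-1)) := Nat.mul_le_mul_left _ hsum2
  have h3 : (q+1) * (n * (k-1)) = n * ((q+1)*(k-1)) := by ring
  have h4 : n * ((q+1)*(k-1)) ≤ n * (n-2) := Nat.mul_le_mul_left n hA
  have h5 : n * (n-1) ≤ n * (n-2) := by omega
  have h6 : n - 1 ≤ n - 2 := Nat.le_of_mul_le_mul_left h5 (by omega)
  omega

/-- Proposition 1 (lower bound): if `k ≥ 2` and `q < (n-1)/(k-1) - 1` then `S(n,q) ≥ k`:
Client can ensure that his final graph has a vertex of degree at least `k`. -/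
theorem stmt1 (n k q : ℕ) (hn : 0 < n) (hk : 2 ≤ k) (hq : 0 < q)
    (h : (q : ℝ) < ((n : ℝ) - 1) / ((k : ℝ) - 1) - 1) :
    ClientCanForce (Kboard n) q
      (fun C => ∃ v : Fin n, k ≤ ((clientGraph C).neighborSet v).ncard) := by
  classical
  -- convert the real inequality into a natural-number one
  have hk1 : (0:ℝ) < (k:ℝ) - 1 := by
    have : (2:ℝ) ≤ (k:ℝ) := by exact_mod_cast hk
    linarith
  have hR : ((q:ℝ)+1) * ((k:ℝ)-1) < (n:ℝ) - 1 := by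
    have h2 : (q:ℝ)+1 < ((n:ℝ)-1)/((k:ℝ)-1) := by linarith
    have := (lt_div_iff₀ hk1).mp h2
    linarith
  have hN : (q+1)*(k-1) + 1 < n := by
    have h' : (((q+1)*(k-1) + 1 : ℕ) : ℝ) < (n:ℝ) := by
      push_cast [Nat.cast_sub (by omega : 1 ≤ k)]
      linarith
    exact_mod_cast h'
  have hA : (q+1)*(k-1) ≤ n - 2 := by omega
  have hn4 : 4 ≤ n := by
    have h2q : 2 ≤ q+1 := by omega
    have h1k : 1 ≤ k-1 := by omega
    have : 2*1 ≤ (q+1)*(k-1) := Nat.mul_le_mul h2q h1k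
    omega
  rw [ClientCanForce]
  apply clientCanAux_of_count q _ _ ∅ (Kboard n) le_rfl (Finset.disjoint_left.mpr (by simp))
  intro S _ hSK hcount
  refine degree_of_many_edges n k q hn4 hk hA S ?_ (by simpa using hcount)
  intro e he
  simpa using hSK he
end

section
/- For all integers n ≥ 1 and c ≥ 2, if q = c·n then P(n,q) < 2·log₂(log_{2c/3}(q)) + 1, i.e., Waiter has a strategy in the Client-Waiter game with bias q = c·n played on the board E(K_n) guaranteeing that Client's final graph contains no path with at least 2·log₂(log_{2c/3}(q)) + 1 edges. -/
open Finset

variable {α : Type*}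

namespace CW

open SimpleGraph Finset

variable {n : ℕ}

abbrev Edge (n : ℕ) := Sym2 (Fin n)

/-- every path ending at `v` has length ≤ t -/
def EBnd (C : Finset (Edge n)) (v : Fin n) (t : ℕ) : Prop :=
  ∀ ⦃a : Fin n⦄ (p : (clientGraph C).Walk a v), p.IsPath → p.length ≤ t

/-- every path has length ≤ t -/
def PBnd (C : Finset (Edge n)) (t : ℕ) : Prop :=
  ∀ ⦃a b : Fin n⦄ (p : (clientGraph C).Walk a b), p.IsPath → p.length ≤ t

/-- the vertices of `L` are pairwise unreachable from one another -/
def NoLink (C : Finset (Edge n)) (L : Finset (Fin n)) : Prop :=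
  ∀ ⦃v⦄, v ∈ L → ∀ ⦃w⦄, w ∈ L → v ≠ w → ¬ (clientGraph C).Reachable v w

lemma cg_adj {C : Finset (Edge n)} {a b : Fin n} :
    (clientGraph C).Adj a b ↔ s(a,b) ∈ C ∧ a ≠ b := by
  simp [clientGraph, fromEdgeSet_adj]

lemma cg_insert_adj {C : Finset (Edge n)} {x : Edge n} {a b : Fin n} :
    (clientGraph (insert x C)).Adj a b ↔ (clientGraph C).Adj a b ∨ (s(a,b) = x ∧ a ≠ b) := by
  simp only [cg_adj, Finset.mem_insert]
  tauto

lemma path_loop_len {V : Type*} {G : SimpleGraph V} {v : V} (p : G.Walk v v) (hp : p.IsPath) :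
    p.length = 0 := by
  cases p with
  | nil => rfl
  | cons h q =>
    rw [Walk.cons_isPath_iff] at hp
    exact absurd q.end_mem_support hp.2

lemma walk_decomp {C : Finset (Edge n)} {u w : Fin n}
    {a b : Fin n} (p : (clientGraph (insert s(u,w) C)).Walk a b) (hp : p.IsPath) :
    (∃ q : (clientGraph C).Walk a b, q.IsPath ∧ q.length = p.length ∧ q.support ⊆ p.support) ∨
    (∃ (q₁ : (clientGraph C).Walk a u) (q₂ : (clientGraph C).Walk w b),
      q₁.IsPath ∧ q₂.IsPath ∧ q₁.length + 1 + q₂.length = p.length ∧ q₁.support ⊆ p.support) ∨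
    (∃ (q₁ : (clientGraph C).Walk a w) (q₂ : (clientGraph C).Walk u b),
      q₁.IsPath ∧ q₂.IsPath ∧ q₁.length + 1 + q₂.length = p.length ∧ q₁.support ⊆ p.support) := by
  induction p with
  | nil =>
    exact Or.inl ⟨Walk.nil, Walk.IsPath.nil, rfl, by intro z hz; exact hz⟩
  | @cons a a' b h p' ih =>
    rw [Walk.cons_isPath_iff] at hp
    obtain ⟨hp', ha⟩ := hp
    by_cases hx : s(a, a') = s(u, w)
    · -- the head edge is the new edge
      have hnd : s(a,a') ∉ p'.edges := by
        have hpc : (Walk.cons h p').IsPath := (Walk.cons_isPath_iff h p').mpr ⟨hp', ha⟩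
        have hnd2 := hpc.edges_nodup
        rw [Walk.edges_cons] at hnd2
        exact (List.nodup_cons.1 hnd2).1
      have htr : ∀ e ∈ p'.edges, e ∈ (clientGraph C).edgeSet := by
        intro e he
        have h1 : e ∈ (clientGraph (insert s(u,w) C)).edgeSet := p'.edges_subset_edgeSet he
        rw [clientGraph, edgeSet_fromEdgeSet] at h1 ⊢
        rcases h1 with ⟨h1m, h1d⟩
        refine ⟨?_, h1d⟩
        rw [Finset.coe_insert, Set.mem_insert_iff] at h1m
        rcases h1m with rfl | h1m
        · rw [hx] at hnd
          exact absurd he hnd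
        · exact h1m
      let q₂ := p'.transfer (clientGraph C) htr
      have hq₂ : q₂.IsPath := by
        rw [Walk.isPath_def, Walk.support_transfer]
        exact Walk.isPath_def _ |>.1 hp'
      have hql : q₂.length = p'.length := Walk.length_transfer _ _
      rw [Sym2.eq_iff] at hx
      rcases hx with ⟨rfl, rfl⟩ | ⟨rfl, rfl⟩
      · refine Or.inr (Or.inl ⟨Walk.nil, q₂, Walk.IsPath.nil, hq₂, by simp [hql]; omega, ?_⟩)
        simp [Walk.support_cons]
      · refine Or.inr (Or.inr ⟨Walk.nil, q₂, Walk.IsPath.nil, hq₂, by simp [hql]; omega, ?_⟩)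
        simp [Walk.support_cons]
    · -- the head edge is an old edge
      have h' : (clientGraph C).Adj a a' := by
        rcases cg_insert_adj.1 h with h0 | ⟨he, _⟩
        · exact h0
        · exact absurd he hx
      rcases ih hp' with ⟨q, hq, hl, hs⟩ | ⟨q₁, q₂, h1, h2, hl, hs⟩ | ⟨q₁, q₂, h1, h2, hl, hs⟩
      · refine Or.inl ⟨Walk.cons h' q, ?_, by simp [hl], ?_⟩
        · rw [Walk.cons_isPath_iff]
          exact ⟨hq, fun hmem => ha (hs hmem)⟩
        · rw [Walk.support_cons, Walk.support_cons]
          exact List.cons_subset_cons _ hs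
      · refine Or.inr (Or.inl ⟨Walk.cons h' q₁, q₂, ?_, h2, by simp [← hl]; omega, ?_⟩)
        · rw [Walk.cons_isPath_iff]
          exact ⟨h1, fun hmem => ha (hs hmem)⟩
        · rw [Walk.support_cons, Walk.support_cons]
          exact List.cons_subset_cons _ hs
      · refine Or.inr (Or.inr ⟨Walk.cons h' q₁, q₂, ?_, h2, by simp [← hl]; omega, ?_⟩)
        · rw [Walk.cons_isPath_iff]
          exact ⟨h1, fun hmem => ha (hs hmem)⟩
        · rw [Walk.support_cons, Walk.support_cons]
          exact List.cons_subset_cons _ hs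

lemma EBnd_mono {C : Finset (Edge n)} {v : Fin n} {s t : ℕ} (h : EBnd C v s) (hst : s ≤ t) :
    EBnd C v t := fun _ p hp => le_trans (h p hp) hst

lemma PBnd_mono {C : Finset (Edge n)} {s t : ℕ} (h : PBnd C s) (hst : s ≤ t) :
    PBnd C t := fun _ _ p hp => le_trans (h p hp) hst

lemma NoLink_mono {C : Finset (Edge n)} {L L' : Finset (Fin n)} (h : NoLink C L) (hsub : L' ⊆ L) :
    NoLink C L' := fun _ hv _ hw hne => h (hsub hv) (hsub hw) hne

lemma EBnd_empty (v : Fin n) (t : ℕ) : EBnd (∅ : Finset (Edge n)) v t := by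
  intro a p _
  cases p with
  | nil => exact Nat.zero_le _
  | cons h q => rw [cg_adj] at h; exact absurd h.1 (Finset.notMem_empty _)

lemma PBnd_empty (t : ℕ) : PBnd (∅ : Finset (Edge n)) t := by
  intro a b p _
  cases p with
  | nil => exact Nat.zero_le _
  | cons h q => rw [cg_adj] at h; exact absurd h.1 (Finset.notMem_empty _)

lemma NoLink_empty (L : Finset (Fin n)) : NoLink (∅ : Finset (Edge n)) L := by
  intro v _ w _ hne hr
  obtain ⟨p⟩ := hr
  cases p with
  | nil => exact hne rfl
  | cons h q => rw [cg_adj] at h; exact absurd h.1 (Finset.notMem_empty _)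

lemma EBnd_insert_host {C : Finset (Edge n)} {u w : Fin n} {α β : ℕ}
    (hu : EBnd C u α) (hw : EBnd C w β) (hnr : ¬ (clientGraph C).Reachable u w) :
    EBnd (insert s(u,w) C) w (max β (α+1)) := by
  intro a p hp
  rcases walk_decomp p hp with ⟨q, hq, hl, _⟩ | ⟨q₁, q₂, h1, h2, hl, _⟩ | ⟨q₁, q₂, h1, h2, hl, _⟩
  · have := hw q hq
    omega
  · have h0 : q₂.length = 0 := path_loop_len q₂ h2
    have := hu q₁ h1
    omega
  · exact absurd q₂.reachable hnr

lemma EBnd_insert_far {C : Finset (Edge n)} {u w v : Fin n} {t : ℕ} (hv : EBnd C v t)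
    (h1 : ¬ (clientGraph C).Reachable w v) (h2 : ¬ (clientGraph C).Reachable u v) :
    EBnd (insert s(u,w) C) v t := by
  intro a p hp
  rcases walk_decomp p hp with ⟨q, hq, hl, _⟩ | ⟨q₁, q₂, _, h2', hl, _⟩ | ⟨q₁, q₂, _, h2', hl, _⟩
  · have := hv q hq
    omega
  · exact absurd q₂.reachable h1
  · exact absurd q₂.reachable h2

lemma PBnd_insert {C : Finset (Edge n)} {u w : Fin n} {α β γ : ℕ}
    (hu : EBnd C u α) (hw : EBnd C w β) (hG : PBnd C γ) :
    PBnd (insert s(u,w) C) (max γ (α + 1 + β)) := by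
  intro a b p hp
  rcases walk_decomp p hp with ⟨q, hq, hl, _⟩ | ⟨q₁, q₂, h1, h2, hl, _⟩ | ⟨q₁, q₂, h1, h2, hl, _⟩
  · have := hG q hq
    omega
  · have e1 := hu q₁ h1
    have e2 := hw q₂.reverse ((Walk.isPath_reverse_iff q₂).2 h2)
    rw [Walk.length_reverse] at e2
    omega
  · have e1 := hw q₁ h1
    have e2 := hu q₂.reverse ((Walk.isPath_reverse_iff q₂).2 h2)
    rw [Walk.length_reverse] at e2
    omega

lemma NoLink_insert {C : Finset (Edge n)} {u w : Fin n} {L : Finset (Fin n)}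
    (hL : NoLink C L) (hu : u ∈ L) (_hw : w ∈ L) :
    NoLink (insert s(u,w) C) (L.erase u) := by
  intro v hv v' hv' hne hr
  obtain ⟨pw⟩ := hr
  have hp := pw.bypass_isPath
  rcases walk_decomp pw.bypass hp with ⟨q, _, _, _⟩ | ⟨q₁, q₂, _, _, _, _⟩ | ⟨q₁, q₂, _, _, _, _⟩
  · exact hL (Finset.mem_of_mem_erase hv) (Finset.mem_of_mem_erase hv') hne q.reachable
  · exact hL (Finset.mem_of_mem_erase hv) hu (Finset.ne_of_mem_erase hv) q₁.reachable
  · exact hL hu (Finset.mem_of_mem_erase hv') (Finset.ne_of_mem_erase hv').symm q₂.reachable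


open SimpleGraph Finset

variable {c : ℕ}


lemma mem_Kboard {e : Edge n} : e ∈ Kboard n ↔ ¬ e.IsDiag := by
  rw [Kboard, mem_edgeFinset, edgeSet_top]
  rfl

lemma Kboard_card : 2 * (Kboard n).card = n * (n - 1) := by
  have h1 : (Kboard n).card = n.choose 2 := by
    rw [Kboard, card_edgeFinset_top_eq_card_choose_two, Fintype.card_fin]
  rw [h1, Nat.choose_two_right]
  obtain ⟨t, ht⟩ : 2 ∣ n * (n - 1) := by
    rcases Nat.even_or_odd n with he | ho
    · exact Dvd.dvd.mul_right he.two_dvd _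
    · exact Dvd.dvd.mul_left (Nat.Odd.sub_odd ho odd_one).two_dvd _
  omega

/-- number of non-diagonal Sym2 elements supported in B -/
lemma card_le_pairs {F : Finset (Edge n)} {B : Finset (Fin n)}
    (hFb : F ⊆ Kboard n) (hsub : ∀ e ∈ F, ∀ v ∈ e, v ∈ B) :
    2 * F.card ≤ B.card * (B.card - 1) := by
  classical
  have hF : F ⊆ B.sym2.filter (fun e => ¬ e.IsDiag) := by
    intro e he
    rw [mem_filter, mem_sym2_iff]
    exact ⟨fun a ha => hsub e he a ha, mem_Kboard.1 (hFb he)⟩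
  have hdiag : B.sym2.filter (fun e => e.IsDiag) = B.image Sym2.diag := by
    ext e
    rw [mem_filter, mem_sym2_iff, mem_image]
    constructor
    · rintro ⟨hmem, hd⟩
      obtain ⟨x, rfl⟩ : ∃ x, Sym2.diag x = e := by
        induction e using Sym2.ind with
        | h a b => exact ⟨a, by rw [Sym2.mk_isDiag_iff.1 hd]; rfl⟩
      exact ⟨x, hmem x (by rw [Sym2.diag]; exact Sym2.mem_mk_left x x), rfl⟩
    · rintro ⟨x, hx, rfl⟩
      refine ⟨fun a ha => ?_, Sym2.diag_isDiag x⟩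
      rw [Sym2.diag, Sym2.mem_iff] at ha
      rcases ha with rfl | rfl <;> exact hx
  have hcards := Finset.card_filter_add_card_filter_not
    (s := B.sym2) (p := fun e => e.IsDiag)
  rw [hdiag, Finset.card_image_of_injective _ Sym2.diag_injective, Finset.card_sym2] at hcards
  have hle : F.card ≤ (B.sym2.filter (fun e => ¬ e.IsDiag)).card := Finset.card_le_card hF
  have hch : 2 * ((B.card + 1).choose 2) = (B.card + 1) * B.card := by
    rw [Nat.choose_two_right, Nat.add_sub_cancel]
    obtain ⟨t, ht⟩ : 2 ∣ (B.card + 1) * B.card := by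
      rw [mul_comm]
      exact (Nat.even_mul_succ_self B.card).two_dvd
    omega
  have e3 : (B.card + 1) * B.card = B.card * B.card + B.card := by ring
  have e4 : B.card * (B.card - 1) + B.card = B.card * B.card := by
    rcases Nat.eq_zero_or_pos B.card with h | h
    · simp [h]
    · have : B.card - 1 + 1 = B.card := by omega
      calc B.card * (B.card - 1) + B.card = B.card * ((B.card - 1) + 1) := by ring
        _ = B.card * B.card := by rw [this]
  omega

/-- at most `L.card - 1` free edges contain `v`, when all free edges have both endpoints
in `L` and are non-diagonal, and `v ∈ L`. -/
lemma star_card {F : Finset (Edge n)} {L : Finset (Fin n)}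
    (hFb : F ⊆ Kboard n) (hsub : ∀ e ∈ F, ∀ x ∈ e, x ∈ L) {v : Fin n} (hv : v ∈ L) :
    (F.filter (fun e => v ∈ e)).card ≤ L.card - 1 := by
  classical
  have hmain : (F.filter (fun e => v ∈ e)).card ≤ (L.erase v).card := by
    apply Finset.card_le_card_of_injOn (fun e => if h : v ∈ e then Sym2.Mem.other' h else v)
    · intro e he
      simp only [Finset.mem_coe, mem_filter] at he ⊢
      obtain ⟨heF, hev⟩ := he
      rw [dif_pos hev]
      have hmem : Sym2.Mem.other' hev ∈ e := Sym2.other_mem' hev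
      refine Finset.mem_erase.2 ⟨?_, hsub e heF _ hmem⟩
      intro heq
      have hspec := Sym2.other_spec' hev
      rw [heq] at hspec
      have : e.IsDiag := by rw [← hspec]; exact Sym2.mk_isDiag_iff.2 rfl
      exact (mem_Kboard.1 (hFb heF)) this
    · intro e1 h1 e2 h2 heq
      rw [Finset.coe_filter, Set.mem_setOf_eq] at h1 h2
      dsimp only at heq
      rw [dif_pos h1.2, dif_pos h2.2] at heq
      rw [← Sym2.other_spec' h1.2, ← Sym2.other_spec' h2.2, heq]
  rwa [Finset.card_erase_of_mem hv] at hmain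

lemma arith_step {D m0 b k N : ℕ} (h3 : D * b ≤ m0 * m0) (h5 : m0 * D ^ (2^k - 1) ≤ N ^ (2^k)) :
    b * D ^ (2^(k+1) - 1) ≤ N ^ (2^(k+1)) := by
  have h1 : 1 ≤ 2^k := Nat.one_le_two_pow
  have e2 : 2^(k+1) = 2^k + 2^k := by rw [pow_succ]; ring
  have e1 : 2^(k+1) - 1 = (2^k - 1) + (2^k - 1) + 1 := by omega
  calc b * D ^ (2^(k+1) - 1) = (D * b) * (D^(2^k - 1) * D^(2^k - 1)) := by
        rw [e1, pow_add, pow_add, pow_one]; ring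
    _ ≤ (m0 * m0) * (D^(2^k - 1) * D^(2^k - 1)) := Nat.mul_le_mul_right _ h3
    _ = (m0 * D^(2^k - 1)) * (m0 * D^(2^k - 1)) := by ring
    _ ≤ N^(2^k) * N^(2^k) := Nat.mul_le_mul h5 h5
    _ = N^(2^(k+1)) := by rw [e2, pow_add]

lemma key_real (hc : 2 ≤ c) (hn : 1 ≤ n) (j : ℕ) (hj : 1 ≤ j)
    (h : (c*n+1) ^ (2^j - 1) ≤ n ^ (2^j)) :
    (j : ℝ) < Real.logb 2 (Real.logb (2*(c:ℝ)/3) ((c:ℝ)*(n:ℝ))) := by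
  have hE2 : 2 ≤ 2^j := by
    calc 2 = 2^1 := rfl
    _ ≤ 2^j := Nat.pow_le_pow_right (by norm_num) hj
  set E := 2^j with hE
  -- nat step : c^(E-1) ≤ n
  have hnat : c ^ (E-1) ≤ n := by
    have h2 : n ^ E = n ^ (E-1) * n := by
      conv_lhs => rw [show E = (E-1)+1 by omega]
      rw [pow_succ]
    have h1 : c^(E-1) * n^(E-1) ≤ n * n^(E-1) := by
      have h0 : (c*n) ^ (E-1) ≤ (c*n+1) ^ (E-1) := Nat.pow_le_pow_left (by omega) _
      calc c^(E-1) * n^(E-1) = (c*n)^(E-1) := (mul_pow c n (E-1)).symm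
        _ ≤ (c*n+1)^(E-1) := h0
        _ ≤ n ^ E := h
        _ = n^(E-1) * n := h2
        _ = n * n^(E-1) := mul_comm _ _
    have hpos : 0 < n ^ (E-1) := Nat.pow_pos (by omega)
    exact Nat.le_of_mul_le_mul_right h1 hpos
  -- real step
  have hcR : (2:ℝ) ≤ (c:ℝ) := by exact_mod_cast hc
  have hnR : (1:ℝ) ≤ (n:ℝ) := by exact_mod_cast hn
  have hcnpos : (0:ℝ) < (c:ℝ)*(n:ℝ) := by nlinarith
  have hb : (1:ℝ) < 2*(c:ℝ)/3 := by nlinarith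
  have hnatR : (c:ℝ) ^ (E-1) ≤ (n:ℝ) := by exact_mod_cast hnat
  have hfrac : ((2:ℝ)/3) ^ E ≤ (2/3)^2 := by
    apply pow_le_pow_of_le_one (by norm_num) (by norm_num) hE2
  have hstep2 : (2*(c:ℝ)/3) ^ E < (c:ℝ)*(n:ℝ) := by
    have he : (2*(c:ℝ)/3) = (2/3) * c := by ring
    have hcE : (c:ℝ)^E = c * c^(E-1) := by
      conv_lhs => rw [show E = 1 + (E-1) by omega]
      rw [pow_add, pow_one]
    rw [he, mul_pow, hcE]
    have hcpos : (0:ℝ) < c := by linarith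
    have h1 : (c:ℝ) * c^(E-1) ≤ c * n := by
      apply mul_le_mul_of_nonneg_left hnatR (le_of_lt hcpos)
    have h2 : (0:ℝ) ≤ ((2:ℝ)/3)^E := by positivity
    have h3 : ((2:ℝ)/3)^E * ((c:ℝ) * c^(E-1)) ≤ (4/9) * (c*n) := by
      have : ((2:ℝ)/3)^2 = 4/9 := by norm_num
      rw [← this]
      apply mul_le_mul hfrac h1 (by positivity) (by positivity)
    nlinarith
  -- logb steps
  have hinner : (E:ℝ) < Real.logb (2*(c:ℝ)/3) ((c:ℝ)*(n:ℝ)) := by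
    rw [Real.lt_logb_iff_rpow_lt hb hcnpos, Real.rpow_natCast]
    exact hstep2
  have houter : Real.logb 2 ((E:ℝ)) < Real.logb 2 (Real.logb (2*(c:ℝ)/3) ((c:ℝ)*(n:ℝ))) := by
    apply Real.logb_lt_logb one_lt_two _ hinner
    have : (0:ℕ) < E := by omega
    exact_mod_cast this
  have hself : Real.logb 2 ((E:ℝ)) = (j:ℝ) := by
    rw [hE]
    push_cast
    rw [Real.logb_pow, Real.logb_self_eq_one one_lt_two]
    ring
  rwa [hself] at houter

lemma base_pos (hc : 2 ≤ c) (hn : 1 ≤ n) :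
    0 < Real.logb 2 (Real.logb (2*(c:ℝ)/3) ((c:ℝ)*(n:ℝ))) := by
  have hcR : (2:ℝ) ≤ (c:ℝ) := by exact_mod_cast hc
  have hnR : (1:ℝ) ≤ (n:ℝ) := by exact_mod_cast hn
  have hcnpos : (0:ℝ) < (c:ℝ)*(n:ℝ) := by nlinarith
  have hb : (1:ℝ) < 2*(c:ℝ)/3 := by nlinarith
  apply Real.logb_pos one_lt_two
  rw [Real.lt_logb_iff_rpow_lt hb hcnpos, Real.rpow_one]
  nlinarith


structure GS (n c : ℕ) (C F : Finset (Sym2 (Fin n))) where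
  k : ℕ
  A : Finset (Fin n)
  B : Finset (Fin n)
  m0 : ℕ
  hdisj : Disjoint A B
  hFboard : F ⊆ Kboard n
  hFsub : ∀ e ∈ F, ∀ v ∈ e, v ∈ A ∪ B
  hEA : ∀ v ∈ A, EBnd C v k
  hEB : ∀ v ∈ B, EBnd C v (k+1)
  hP1 : PBnd C (2*k+2)
  hP2 : B = ∅ → PBnd C (2*k+1)
  hNL : NoLink C (A ∪ B)
  hW3 : (c*n+1) * B.card + 2 * F.card ≤ m0 * (m0 - 1)
  hW5 : m0 * (c*n+1) ^ (2^k - 1) ≤ n ^ (2^k)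
  hW6 : (A ∪ B).card ≤ m0
  hm0n : m0 ≤ n
  hW7 : 1 ≤ m0

def init (hn : 1 ≤ n) : GS n c ∅ (Kboard n) where
  k := 0
  A := Finset.univ
  B := ∅
  m0 := n
  hdisj := by simp
  hFboard := subset_rfl
  hFsub := by intro e _ v _; simp
  hEA := fun v _ => EBnd_empty v 0
  hEB := fun v hv => absurd hv (Finset.notMem_empty v)
  hP1 := PBnd_empty _
  hP2 := fun _ => PBnd_empty _
  hNL := NoLink_empty _
  hW3 := by
    have := Kboard_card (n := n)
    simp only [Finset.card_empty, mul_zero, zero_add]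
    have h1 : n * (n-1) ≤ n * (n-1) := le_rfl
    omega
  hW5 := by simp
  hW6 := by simp
  hm0n := le_rfl
  hW7 := hn

lemma touch_or_trans {C F : Finset (Edge n)} (st : GS n c C F) (hFne : F.Nonempty) :
    ∃ st' : GS n c C F, ∃ e ∈ F, ∃ a ∈ st'.A, a ∈ e := by
  classical
  by_cases hT : ∃ e ∈ F, ∃ a ∈ st.A, a ∈ e
  · exact ⟨st, hT⟩
  · push_neg at hT
    have hsubB : ∀ e ∈ F, ∀ v ∈ e, v ∈ st.B := by
      intro e he v hv
      have h1 := st.hFsub e he v hv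
      rw [Finset.mem_union] at h1
      rcases h1 with h | h
      · exact absurd hv (hT e he v h)
      · exact h
    obtain ⟨e0, he0⟩ := hFne
    have hx0 : e0.out.1 ∈ e0 := Sym2.out_fst_mem e0
    have hx0B : e0.out.1 ∈ st.B := hsubB e0 he0 _ hx0
    have hBne : 1 ≤ st.B.card := Finset.card_pos.2 ⟨_, hx0B⟩
    refine ⟨⟨st.k+1, st.B, ∅, st.B.card, ?_, st.hFboard, ?_, ?_, ?_, ?_, ?_, ?_, ?_, ?_, ?_, ?_, ?_⟩,
      e0, he0, e0.out.1, ?_, hx0⟩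
    · simp
    · intro e he v hv
      simp only [Finset.union_empty]
      exact hsubB e he v hv
    · exact st.hEB
    · exact fun v hv => absurd hv (Finset.notMem_empty v)
    · exact PBnd_mono st.hP1 (by omega)
    · exact fun _ => PBnd_mono st.hP1 (by omega)
    · exact NoLink_mono st.hNL (by simp only [Finset.union_empty]; exact Finset.subset_union_right)
    · simp only [Finset.card_empty, mul_zero, zero_add]
      exact card_le_pairs st.hFboard hsubB
    · apply arith_step _ st.hW5
      have h1 := st.hW3
      have h2 : st.m0 * (st.m0 - 1) ≤ st.m0 * st.m0 := Nat.mul_le_mul_left _ (Nat.sub_le _ _)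
      omega
    · simp only [Finset.union_empty]
      exact le_rfl
    · exact le_trans (le_trans (Finset.card_le_card Finset.subset_union_right) st.hW6) st.hm0n
    · exact hBne
    · exact hx0B

lemma step_core (hn : 1 ≤ n) (hc : 2 ≤ c) {C F : Finset (Edge n)}
    (k : ℕ) (A B : Finset (Fin n)) (m0 : ℕ)
    (hdisj : Disjoint A B)
    (hFboard : F ⊆ Kboard n)
    (hFsub : ∀ e ∈ F, ∀ v ∈ e, v ∈ A ∪ B)
    (hEA : ∀ v ∈ A, EBnd C v k)
    (hEB : ∀ v ∈ B, EBnd C v (k+1))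
    (hP1 : PBnd C (2*k+2))
    (hP2 : B = ∅ → PBnd C (2*k+1))
    (hNL : NoLink C (A ∪ B))
    (hW3 : (c*n+1) * B.card + 2 * F.card ≤ m0 * (m0 - 1))
    (hW5 : m0 * (c*n+1) ^ (2^k - 1) ≤ n ^ (2^k))
    (hW6 : (A ∪ B).card ≤ m0)
    (hm0n : m0 ≤ n)
    (hW7 : 1 ≤ m0)
    (e0 : Edge n) (he0F : e0 ∈ F) (a0 : Fin n) (ha0A : a0 ∈ A) (ha0e : a0 ∈ e0) :
    ∃ O ⊆ F, O.Nonempty ∧ O.card ≤ c*n + 1 ∧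
      ∀ x ∈ O, Nonempty (GS n c (insert x C) (F \ O)) := by
  classical
  set M := (A ∪ B).card with hM
  have hMn : M ≤ n := le_trans hW6 hm0n
  have hcn2 : 2*n ≤ c*n := Nat.mul_le_mul_right n hc
  set Ofs : Finset (Fin n) → Finset (Edge n) :=
    fun S => F.filter (fun e => ∃ a ∈ S, a ∈ e) with hOfs
  have hOfs_insert : ∀ (S : Finset (Fin n)) (w : Fin n),
      Ofs (insert w S) ⊆ Ofs S ∪ F.filter (fun e => w ∈ e) := by
    intro S w e he
    rw [hOfs, Finset.mem_filter] at he
    obtain ⟨heF, a, haS, hae⟩ := he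
    rw [Finset.mem_insert] at haS
    rcases haS with rfl | haS
    · exact Finset.mem_union_right _ (Finset.mem_filter.2 ⟨heF, hae⟩)
    · exact Finset.mem_union_left _ (Finset.mem_filter.2 ⟨heF, a, haS, hae⟩)
  have hstar : ∀ w ∈ A ∪ B, (F.filter (fun e => w ∈ e)).card ≤ M - 1 :=
    fun w hw => star_card hFboard hFsub hw
  set 𝒮 : Finset (Finset (Fin n)) := A.powerset.filter (fun S => (Ofs S).card ≤ c*n+1)
    with h𝒮
  have h𝒮ne : 𝒮.Nonempty := by
    refine ⟨∅, ?_⟩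
    rw [h𝒮, Finset.mem_filter, Finset.mem_powerset]
    constructor
    · exact Finset.empty_subset _
    · have : Ofs ∅ = ∅ := by
        rw [hOfs]
        apply Finset.filter_false_of_mem
        intro e _
        simp
      rw [this]
      simp
  obtain ⟨S, hS𝒮, hSmax'⟩ := Finset.exists_maximal h𝒮ne
  have hSmax : ∀ T ∈ 𝒮, ¬ S < T := fun T hT hlt => (not_le_of_gt hlt) (hSmax' hT hlt.le)
  rw [h𝒮, Finset.mem_filter, Finset.mem_powerset] at hS𝒮
  obtain ⟨hSA, hScard⟩ := hS𝒮
  refine ⟨Ofs S, Finset.filter_subset _ _, ?_, hScard, ?_⟩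
  · -- nonemptiness of the offer
    by_cases ha0S : a0 ∈ S
    · exact ⟨e0, Finset.mem_filter.2 ⟨he0F, a0, ha0S, ha0e⟩⟩
    · by_contra hO0
      rw [Finset.not_nonempty_iff_eq_empty] at hO0
      have hins : insert a0 S ∈ 𝒮 := by
        rw [h𝒮, Finset.mem_filter, Finset.mem_powerset]
        refine ⟨Finset.insert_subset ha0A hSA, ?_⟩
        calc (Ofs (insert a0 S)).card
            ≤ (Ofs S ∪ F.filter (fun e => a0 ∈ e)).card :=
              Finset.card_le_card (hOfs_insert S a0)
          _ ≤ (Ofs S).card + (F.filter (fun e => a0 ∈ e)).card := Finset.card_union_le _ _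
          _ ≤ 0 + (M - 1) := by
              rw [hO0]
              simpa using hstar a0 (Finset.mem_union_left _ ha0A)
          _ ≤ c*n+1 := by omega
      exact hSmax _ hins (Finset.ssubset_insert ha0S)
  · -- each possible pick preserves the invariant
    intro x hxO
    have hxO' := hxO
    rw [hOfs, Finset.mem_filter] at hxO'
    obtain ⟨hxF, u, huS, hux⟩ := hxO'
    set w := Sym2.Mem.other' hux with hwdef
    have hspec : s(u, w) = x := Sym2.other_spec' hux
    have hwx : w ∈ x := hspec ▸ Sym2.mem_mk_right u w
    have hxnd : ¬ x.IsDiag := mem_Kboard.1 (hFboard hxF)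
    have huw : u ≠ w := by
      intro h
      apply hxnd
      rw [← hspec, h]
      exact Sym2.mk_isDiag_iff.2 rfl
    have huA : u ∈ A := hSA huS
    have huAB : u ∈ A ∪ B := Finset.mem_union_left _ huA
    have hwAB : w ∈ A ∪ B := hFsub x hxF w hwx
    have hEw : EBnd C w (k+1) := by
      rcases Finset.mem_union.1 hwAB with h | h
      · exact EBnd_mono (hEA w h) (by omega)
      · exact hEB w h
    have hEu : EBnd C u k := hEA u huA
    have hnr : ¬ (clientGraph C).Reachable u w := hNL huAB hwAB huw
    set A' := (A \ S).erase w with hA'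
    set B' := (insert w B) \ S with hB'
    have hmemA' : ∀ v, v ∈ A' ↔ (v ∈ A ∧ v ∉ S ∧ v ≠ w) := by
      intro v
      rw [hA', Finset.mem_erase, Finset.mem_sdiff]
      constructor
      · rintro ⟨h1, h2, h3⟩
        exact ⟨h2, h3, h1⟩
      · rintro ⟨h1, h2, h3⟩
        exact ⟨h3, h1, h2⟩
    have hmemB' : ∀ v, v ∈ B' ↔ ((v = w ∨ v ∈ B) ∧ v ∉ S) := by
      intro v
      rw [hB', Finset.mem_sdiff, Finset.mem_insert]
    have hlive : A' ∪ B' = (A ∪ B) \ S := by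
      ext v
      rw [Finset.mem_union, hmemA' v, hmemB' v, Finset.mem_sdiff, Finset.mem_union]
      constructor
      · rintro (⟨h1, h2, _⟩ | ⟨h1, h2⟩)
        · exact ⟨Or.inl h1, h2⟩
        · rcases h1 with rfl | h1
          · exact ⟨Finset.mem_union.1 hwAB, h2⟩
          · exact ⟨Or.inr h1, h2⟩
      · rintro ⟨h1, h2⟩
        by_cases hvw : v = w
        · exact Or.inr ⟨Or.inl hvw, h2⟩
        · rcases h1 with h1 | h1
          · exact Or.inl ⟨h1, h2, hvw⟩
          · exact Or.inr ⟨Or.inr h1, h2⟩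
    have hO : Ofs S ⊆ F := Finset.filter_subset _ _
    have hFO : (F \ Ofs S).card = F.card - (Ofs S).card := Finset.card_sdiff_of_subset hO
    have hOFle : (Ofs S).card ≤ F.card := Finset.card_le_card hO
    rw [← hspec]
    refine ⟨⟨k, A', B', m0, ?_, ?_, ?_, ?_, ?_, ?_, ?_, ?_, ?_, hW5, ?_, hm0n, hW7⟩⟩
    · -- disjoint
      rw [Finset.disjoint_left]
      intro v hvA' hvB'
      rw [hmemA' v] at hvA'
      rw [hmemB' v] at hvB'
      rcases hvB'.1 with h | h
      · exact hvA'.2.2 h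
      · exact (Finset.disjoint_left.1 hdisj) hvA'.1 h
    · exact le_trans (Finset.sdiff_subset) hFboard
    · -- hFsub
      intro e he v hv
      rw [Finset.mem_sdiff] at he
      rw [hlive, Finset.mem_sdiff]
      refine ⟨hFsub e he.1 v hv, ?_⟩
      intro hvS
      exact he.2 (Finset.mem_filter.2 ⟨he.1, v, hvS, hv⟩)
    · -- hEA
      intro v hv
      rw [hmemA' v] at hv
      obtain ⟨hvA, hvS, hvw⟩ := hv
      have hvAB : v ∈ A ∪ B := Finset.mem_union_left _ hvA
      have hvu : v ≠ u := fun h => hvS (h ▸ huS)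
      exact EBnd_insert_far (hEA v hvA)
        (hNL hwAB hvAB (fun h => hvw h.symm))
        (hNL huAB hvAB (fun h => hvu h.symm))
    · -- hEB
      intro v hv
      rw [hmemB' v] at hv
      obtain ⟨hv1, hvS⟩ := hv
      rcases eq_or_ne v w with rfl | hvw
      · exact EBnd_mono (EBnd_insert_host hEu hEw hnr) (by omega)
      · have hvB : v ∈ B := hv1.resolve_left hvw
        have hvAB : v ∈ A ∪ B := Finset.mem_union_right _ hvB
        have hvu : v ≠ u := by
          intro h
          exact (Finset.disjoint_left.1 hdisj) (h ▸ huA) hvB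
        exact EBnd_insert_far (hEB v hvB)
          (hNL hwAB hvAB (fun h => hvw h.symm))
          (hNL huAB hvAB (fun h => hvu h.symm))
    · -- hP1
      exact PBnd_mono (PBnd_insert hEu hEw hP1) (by omega)
    · -- hP2
      intro hB'0
      have hsub : insert w B ⊆ S := by
        rw [← Finset.sdiff_eq_empty_iff_subset]
        exact hB'0
      have hwS : w ∈ S := hsub (Finset.mem_insert_self w B)
      have hB0 : B = ∅ := by
        rw [Finset.eq_empty_iff_forall_notMem]
        intro v hv
        have hvS : v ∈ S := hsub (Finset.mem_insert_of_mem hv)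
        exact (Finset.disjoint_left.1 hdisj) (hSA hvS) hv
      have hEwk : EBnd C w k := hEA w (hSA hwS)
      exact PBnd_mono (PBnd_insert hEu hEwk (hP2 hB0)) (by omega)
    · -- hNL
      rw [hlive]
      apply NoLink_mono (NoLink_insert hNL huAB hwAB)
      intro v hv
      rw [Finset.mem_sdiff] at hv
      rw [Finset.mem_erase]
      exact ⟨fun h => hv.2 (h ▸ huS), hv.1⟩
    · -- hW3
      have hcard' : (F \ Ofs S).card = F.card - (Ofs S).card := hFO
      by_cases hwS : w ∈ S
      · -- w dies : B' ⊆ B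
        have hBsub : B' ⊆ B := by
          intro v hv
          rw [hmemB' v] at hv
          rcases hv.1 with rfl | h
          · exact absurd hwS hv.2
          · exact h
        have h1 : (c*n+1) * B'.card ≤ (c*n+1) * B.card :=
          Nat.mul_le_mul_left _ (Finset.card_le_card hBsub)
        omega
      · rcases Finset.mem_union.1 hwAB with hwA | hwB
        · -- increment case
          have hBcard : B'.card ≤ B.card + 1 := by
            calc B'.card ≤ (insert w B).card := Finset.card_le_card (Finset.sdiff_subset)
              _ ≤ B.card + 1 := Finset.card_insert_le _ _
          have hviol : insert w S ∉ 𝒮 := fun hmem => hSmax _ hmem (Finset.ssubset_insert hwS)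
          have hcard2 : c*n+1 < (Ofs (insert w S)).card := by
            by_contra hle
            push_neg at hle
            exact hviol (by
              rw [h𝒮, Finset.mem_filter, Finset.mem_powerset]
              exact ⟨Finset.insert_subset hwA hSA, hle⟩)
          have hle2 : (Ofs (insert w S)).card ≤ (Ofs S).card + (M - 1) := by
            calc (Ofs (insert w S)).card
                ≤ (Ofs S ∪ F.filter (fun e => w ∈ e)).card :=
                  Finset.card_le_card (hOfs_insert S w)
              _ ≤ (Ofs S).card + (F.filter (fun e => w ∈ e)).card :=
                  Finset.card_union_le _ _
              _ ≤ (Ofs S).card + (M - 1) := by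
                  have := hstar w hwAB
                  omega
          have hmul : (c*n+1) * B'.card ≤ (c*n+1) * B.card + (c*n+1) := by
            calc (c*n+1) * B'.card ≤ (c*n+1) * (B.card + 1) :=
                  Nat.mul_le_mul_left _ hBcard
              _ = (c*n+1) * B.card + (c*n+1) := by ring
          omega
        · -- w ∈ B : B' = insert w B has same card as B
          have hBsub : B' ⊆ B := by
            intro v hv
            rw [hmemB' v] at hv
            rcases hv.1 with rfl | h
            · exact hwB
            · exact h
          have h1 : (c*n+1) * B'.card ≤ (c*n+1) * B.card :=
            Nat.mul_le_mul_left _ (Finset.card_le_card hBsub)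
          omega
    · -- hW6
      rw [hlive]
      exact le_trans (Finset.card_le_card (Finset.sdiff_subset)) hW6

lemma step (hn : 1 ≤ n) (hc : 2 ≤ c) {C F : Finset (Edge n)} (st0 : GS n c C F)
    (hFne : F.Nonempty) :
    ∃ O ⊆ F, O.Nonempty ∧ O.card ≤ c*n + 1 ∧
      ∀ x ∈ O, Nonempty (GS n c (insert x C) (F \ O)) := by
  obtain ⟨st, e0, he0, a0, ha0A, ha0e⟩ := touch_or_trans st0 hFne
  obtain ⟨k, A, B, m0, hdisj, hFboard, hFsub, hEA, hEB, hP1, hP2, hNL, hW3, hW5, hW6, hm0n, hW7⟩ := st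
  exact step_core hn hc k A B m0 hdisj hFboard hFsub hEA hEB hP1 hP2 hNL hW3 hW5 hW6 hm0n hW7
    e0 he0 a0 ha0A ha0e

lemma final (hn : 1 ≤ n) (hc : 2 ≤ c) {C : Finset (Edge n)} (st : GS n c C ∅) :
    ∀ (u v : Fin n) (p : (clientGraph C).Walk u v), p.IsPath →
      (p.length : ℝ) < 2 * Real.logb 2 (Real.logb (2*(c:ℝ)/3) ((c:ℝ)*(n:ℝ))) + 1 := by
  obtain ⟨k, A, B, m0, hdisj, hFboard, hFsub, hEA, hEB, hP1, hP2, hNL, hW3, hW5, hW6, hm0n, hW7⟩ := st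
  intro u v p hp
  rcases eq_or_ne B ∅ with hB | hB
  · rcases Nat.eq_zero_or_pos k with rfl | hk
    · have hlen : p.length ≤ 2*0+1 := hP2 hB p hp
      have hL := base_pos (n := n) (c := c) hc hn
      have hcast : (p.length : ℝ) ≤ 1 := by exact_mod_cast hlen
      linarith
    · have hlen : p.length ≤ 2*k+1 := hP2 hB p hp
      have hNat : (c*n+1) ^ (2^k - 1) ≤ n ^ (2^k) := by
        calc (c*n+1)^(2^k-1) = 1 * (c*n+1)^(2^k-1) := (one_mul _).symm
          _ ≤ m0 * (c*n+1)^(2^k-1) := Nat.mul_le_mul_right _ hW7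
          _ ≤ n ^ (2^k) := hW5
      have hkey := key_real hc hn k hk hNat
      have hcast : (p.length : ℝ) ≤ 2*(k:ℝ)+1 := by exact_mod_cast hlen
      linarith
  · have hlen : p.length ≤ 2*k+2 := hP1 p hp
    have hB1 : 1 ≤ B.card := Finset.card_pos.2 (Finset.nonempty_iff_ne_empty.2 hB)
    have h3 : (c*n+1) * B.card ≤ m0 * m0 := by
      have h4 : m0 * (m0-1) ≤ m0 * m0 := Nat.mul_le_mul_left _ (Nat.sub_le _ _)
      have h5 : (Finset.card (∅ : Finset (Edge n))) = 0 := Finset.card_empty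
      omega
    have hNat2 : (c*n+1) ^ (2^(k+1) - 1) ≤ n ^ (2^(k+1)) := by
      have h5 := arith_step h3 hW5
      calc (c*n+1)^(2^(k+1)-1) = 1 * ((c*n+1)^(2^(k+1)-1)) := (one_mul _).symm
        _ ≤ B.card * (c*n+1)^(2^(k+1)-1) := Nat.mul_le_mul_right _ hB1
        _ ≤ n^(2^(k+1)) := h5
    have hkey := key_real hc hn (k+1) (by omega) hNat2
    have hcast : (p.length : ℝ) ≤ 2*(k:ℝ)+2 := by exact_mod_cast hlen
    push_cast at hkey
    linarith

lemma waiter_of_inv {β : Type*} [DecidableEq β] (q : ℕ) (P : Finset β → Prop)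
    (Inv : Finset β → Finset β → Prop)
    (hstep : ∀ C F, Inv C F → F.Nonempty →
      ∃ O ⊆ F, O.Nonempty ∧ O.card ≤ q + 1 ∧ ∀ x ∈ O, Inv (insert x C) (F \ O))
    (hfin : ∀ C F, Inv C F → F = ∅ → P C) :
    ∀ fuel C F, F.card ≤ fuel → Inv C F → WaiterCanAux q P fuel C F := by
  intro fuel
  induction fuel with
  | zero =>
    intro C F hcard hi
    have hF : F = ∅ := Finset.card_eq_zero.1 (Nat.le_zero.1 hcard)
    exact ⟨hF, hfin C F hi hF⟩
  | succ m ih =>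
    intro C F hcard hi
    simp only [WaiterCanAux]
    split_ifs with hF
    · exact hfin C F hi hF
    · obtain ⟨O, hOF, hOne, hOcard, hnext⟩ :=
        hstep C F hi (Finset.nonempty_iff_ne_empty.2 hF)
      refine ⟨O, hOF, hOne, hOcard, fun x hx => ih _ _ ?_ (hnext x hx)⟩
      have h1 : (F \ O).card < F.card := Finset.card_lt_card (Finset.sdiff_ssubset hOF hOne)
      omega

end CW

/-- Proposition: for all integers `n ≥ 1` and `c ≥ 2`, with `q = c n`,
`P(n,q) < 2 log₂(log_{2c/3} q) + 1`: Waiter can ensure that Client's final graph contains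
no path with at least `2 log₂(log_{2c/3}(q)) + 1` edges. -/
theorem stmt14 (n c : ℕ) (hn : 1 ≤ n) (hc : 2 ≤ c) :
    WaiterCanForce (Kboard n) (c * n)
      (fun C => ∀ (u v : Fin n) (p : (clientGraph C).Walk u v), p.IsPath →
        (p.length : ℝ) <
          2 * Real.logb 2 (Real.logb (2 * (c : ℝ) / 3) ((c : ℝ) * (n : ℝ))) + 1) := by
  unfold WaiterCanForce
  exact CW.waiter_of_inv (c*n) _ (fun C F => Nonempty (CW.GS n c C F))
    (fun C F hi hne => hi.elim fun st => CW.step hn hc st hne)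
    (fun C F hi h0 => hi.elim fun st => by
      subst h0
      exact CW.final hn hc st)
    _ ∅ (Kboard n) le_rfl ⟨CW.init hn⟩
end

section
/- Let G and H be graphs, H having at least one edge, such that ⌈ar(G)/2⌉ < ar(H), where ar denotes arboricity. Then Waiter has a winning strategy in the H-game CW(G, H, 1), i.e., Waiter can guarantee that at the end of the game Client's graph contains no copy of H. -/
open Finset

variable {α : Type*}

section CWauxSection
set_option linter.unusedSectionVars false
namespace CWaux

variable {V : Type*} [Fintype V] [DecidableEq V]

def cnt (E : Finset (Sym2 V)) (S : Finset V) : ℕ := (E.filter (· ∈ S.sym2)).card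

lemma cnt_supermod (E : Finset (Sym2 V)) (S T : Finset V) :
    cnt E S + cnt E T ≤ cnt E (S ∩ T) + cnt E (S ∪ T) := by
  have h1 : E.filter (· ∈ S.sym2) ∩ E.filter (· ∈ T.sym2) = E.filter (· ∈ (S ∩ T).sym2) := by
    ext e
    simp only [Finset.mem_inter, Finset.mem_filter, Finset.mem_sym2_iff]
    constructor
    · rintro ⟨⟨he, hS⟩, ⟨_, hT⟩⟩
      exact ⟨he, fun a ha => ⟨hS a ha, hT a ha⟩⟩
    · rintro ⟨he, h⟩
      exact ⟨⟨he, fun a ha => (h a ha).1⟩, ⟨he, fun a ha => (h a ha).2⟩⟩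
  have h2 : E.filter (· ∈ S.sym2) ∪ E.filter (· ∈ T.sym2) ⊆ E.filter (· ∈ (S ∪ T).sym2) := by
    intro e he
    rcases Finset.mem_union.mp he with h | h <;>
      exact Finset.mem_filter.mpr ⟨(Finset.mem_filter.mp h).1,
        Finset.sym2_mono (by simp) (Finset.mem_filter.mp h).2⟩
  have h3 := Finset.card_inter_add_card_union (E.filter (· ∈ S.sym2)) (E.filter (· ∈ T.sym2))
  have h4 := Finset.card_le_card h2
  unfold cnt
  rw [h1] at h3
  omega

lemma two_le_card_of_mem_sym2 {e : Sym2 V} {S : Finset V} (h : e ∈ S.sym2)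
    (hd : ¬ e.IsDiag) : 2 ≤ S.card := by
  induction e using Sym2.ind with
  | _ a b =>
    rw [Finset.mem_sym2_iff] at h
    have ha : a ∈ S := h a (by simp)
    have hb : b ∈ S := h b (by simp)
    have hab : a ≠ b := by simpa [Sym2.mk_isDiag_iff] using hd
    have : ({a, b} : Finset V) ⊆ S := by
      intro x hx; rcases Finset.mem_insert.mp hx with rfl | hx
      · exact ha
      · rw [Finset.mem_singleton.mp hx]; exact hb
    calc 2 = ({a, b} : Finset V).card := (Finset.card_pair hab).symm
    _ ≤ S.card := Finset.card_le_card this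

def Inv (k : ℕ) (C F : Finset (Sym2 V)) : Prop :=
  ∀ S : Finset V, 2 ≤ S.card → 2 * cnt C S + cnt F S ≤ 2 * k * (S.card - 1)

lemma inv_step {k : ℕ} {C F : Finset (Sym2 V)} {e y : Sym2 V}
    (he : e ∈ F) (hy : y ∈ F) (hInv : Inv k C F)
    (key : ∀ S : Finset V, 2 ≤ S.card →
      2 * cnt C S + cnt F S = 2 * k * (S.card - 1) → e ∈ S.sym2 → y ∈ S.sym2 ∧ y ≠ e) :
    Inv k (insert e C) (F \ {e, y}) := by
  intro S hS
  have hOF : ({e, y} : Finset (Sym2 V)) ⊆ F := by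
    intro x hx
    rcases Finset.mem_insert.mp hx with rfl | hx
    · exact he
    · rw [Finset.mem_singleton.mp hx]; exact hy
  have hsub : ({e, y} : Finset (Sym2 V)).filter (· ∈ S.sym2) ⊆ F.filter (· ∈ S.sym2) :=
    Finset.filter_subset_filter _ hOF
  have hsplit : cnt (F \ {e, y}) S + cnt ({e, y} : Finset (Sym2 V)) S = cnt F S := by
    unfold cnt
    have hEq : (F \ {e, y}).filter (· ∈ S.sym2)
        = F.filter (· ∈ S.sym2) \ ({e, y} : Finset (Sym2 V)).filter (· ∈ S.sym2) := by
      ext x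
      simp only [Finset.mem_filter, Finset.mem_sdiff]
      tauto
    rw [hEq, Finset.card_sdiff_of_subset hsub]
    have := Finset.card_le_card hsub
    omega
  have hins : cnt (insert e C) S ≤ cnt C S + (if e ∈ S.sym2 then 1 else 0) := by
    unfold cnt
    rw [Finset.filter_insert]
    split
    · simp [Finset.card_insert_le]
    · simp
  have hIS := hInv S hS
  set R := 2 * k * (S.card - 1) with hR
  by_cases hpe : e ∈ S.sym2
  · rw [if_pos hpe] at hins
    have hoc1 : 1 ≤ cnt ({e, y} : Finset (Sym2 V)) S := by
      apply Finset.card_pos.mpr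
      exact ⟨e, Finset.mem_filter.mpr ⟨Finset.mem_insert_self _ _, hpe⟩⟩
    by_cases htight : 2 * cnt C S + cnt F S = R
    · obtain ⟨hyS, hyne⟩ := key S hS htight hpe
      have hoc2 : cnt ({e, y} : Finset (Sym2 V)) S = 2 := by
        unfold cnt
        rw [Finset.filter_true_of_mem, Finset.card_pair (Ne.symm hyne)]
        intro x hx
        rcases Finset.mem_insert.mp hx with rfl | hx
        · exact hpe
        · rw [Finset.mem_singleton.mp hx]; exact hyS
      omega
    · omega
  · rw [if_neg hpe] at hins
    omega


-- ## Part 1: the board bound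
lemma arboricity_nonneg {β : Type*} (G : SimpleGraph β) : 0 ≤ arboricity G := by
  apply Real.sSup_nonneg
  rintro x ⟨G', h2, rfl⟩
  have hv : (2 : ℝ) ≤ G'.verts.ncard := by exact_mod_cast h2
  apply div_nonneg (by positivity)
  linarith

lemma arboricity_bddAbove {β : Type*} [Fintype β] (G : SimpleGraph β) :
    BddAbove {x : ℝ | ∃ G' : G.Subgraph, 2 ≤ G'.verts.ncard ∧
      x = (G'.edgeSet.ncard : ℝ) / ((G'.verts.ncard : ℝ) - 1)} := by
  classical
  refine ⟨(G.edgeSet.ncard : ℝ), ?_⟩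
  rintro x ⟨G', h2, rfl⟩
  have hv : (2 : ℝ) ≤ G'.verts.ncard := by exact_mod_cast h2
  have hee : (G'.edgeSet.ncard : ℝ) ≤ G.edgeSet.ncard := by
    exact_mod_cast Set.ncard_le_ncard G'.edgeSet_subset (G.edgeSet.toFinite)
  calc (G'.edgeSet.ncard : ℝ) / ((G'.verts.ncard : ℝ) - 1) ≤ (G'.edgeSet.ncard : ℝ) :=
      div_le_self (by positivity) (by linarith)
  _ ≤ _ := hee

lemma board_bound (G : SimpleGraph V) [DecidableRel G.Adj] {k : ℕ}
    (hk : arboricity G ≤ 2 * k) (S : Finset V) (hS : 2 ≤ S.card) :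
    cnt G.edgeFinset S ≤ 2 * k * (S.card - 1) := by
  classical
  let G' : G.Subgraph :=
    { verts := ↑S
      Adj := fun a b => G.Adj a b ∧ a ∈ S ∧ b ∈ S
      adj_sub := fun h => h.1
      edge_vert := fun h => h.2.1
      symm := ⟨fun a b h => ⟨h.1.symm, h.2.2, h.2.1⟩⟩ }
  have hv : G'.verts.ncard = S.card := by simp [G', Set.ncard_coe_finset]
  have hedge : G'.edgeSet = ↑(G.edgeFinset.filter (· ∈ S.sym2)) := by
    ext x
    induction x using Sym2.ind with
    | _ a b =>
      simp only [SimpleGraph.Subgraph.mem_edgeSet, Finset.coe_filter, Set.mem_setOf_eq,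
        SimpleGraph.mem_edgeFinset, SimpleGraph.mem_edgeSet, Finset.mem_sym2_iff]
      constructor
      · rintro ⟨hadj, ha, hb⟩
        refine ⟨hadj, fun v hv' => ?_⟩
        rw [Sym2.mem_iff] at hv'
        rcases hv' with rfl | rfl
        · exact ha
        · exact hb
      · rintro ⟨hadj, h⟩
        exact ⟨hadj, h a (by simp), h b (by simp)⟩
  have hecard : G'.edgeSet.ncard = cnt G.edgeFinset S := by
    rw [hedge, Set.ncard_coe_finset]; rfl
  have hmem : (G'.edgeSet.ncard : ℝ) / ((G'.verts.ncard : ℝ) - 1) ∈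
      {x : ℝ | ∃ G'' : G.Subgraph, 2 ≤ G''.verts.ncard ∧
        x = (G''.edgeSet.ncard : ℝ) / ((G''.verts.ncard : ℝ) - 1)} :=
    ⟨G', by rw [hv]; exact hS, rfl⟩
  have hle : (G'.edgeSet.ncard : ℝ) / ((G'.verts.ncard : ℝ) - 1) ≤ arboricity G :=
    le_csSup (arboricity_bddAbove G) hmem
  rw [hecard, hv] at hle
  have hpos : (0 : ℝ) < (S.card : ℝ) - 1 := by
    have : (2 : ℝ) ≤ (S.card : ℝ) := by exact_mod_cast hS
    linarith
  have h2 : (cnt G.edgeFinset S : ℝ) ≤ 2 * k * ((S.card : ℝ) - 1) := by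
    exact (div_le_iff₀ hpos).mp (hle.trans hk)
  have hcast : ((2 * k * (S.card - 1) : ℕ) : ℝ) = 2 * k * ((S.card : ℝ) - 1) := by
    push_cast [Nat.cast_sub (by omega : 1 ≤ S.card)]
    ring
  exact_mod_cast hcast ▸ h2

-- ## Part 2: no copy of H
lemma no_copy {β : Type*} [Fintype β] (H : SimpleGraph β) {k : ℕ} {H' : H.Subgraph}
    (hH2 : 2 ≤ H'.verts.ncard)
    (hnlt : k * (H'.verts.ncard - 1) < H'.edgeSet.ncard)
    (C : Finset (Sym2 V))
    (hC : ∀ S : Finset V, 2 ≤ S.card → 2 * cnt C S ≤ 2 * k * (S.card - 1)) :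
    ¬ ContainsCopy H (clientGraph C) := by
  classical
  rintro ⟨f, finj, hmap⟩
  set Tfin := (H'.verts.toFinite).toFinset with hTfin
  set S := Tfin.image f with hSdef
  have hTcard : Tfin.card = H'.verts.ncard := (Set.ncard_eq_toFinset_card _ _).symm
  have hScard : S.card = H'.verts.ncard := by
    rw [hSdef, Finset.card_image_of_injective _ finj, hTcard]
  have hS2 : 2 ≤ S.card := hScard ▸ hH2
  set Efin := (H'.edgeSet.toFinite).toFinset with hEfin
  have hEcard : Efin.card = H'.edgeSet.ncard := (Set.ncard_eq_toFinset_card _ _).symm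
  have hle : Efin.card ≤ cnt C S := by
    apply Finset.card_le_card_of_injOn (Sym2.map f)
    · intro x hx
      induction x using Sym2.ind with
      | _ a b =>
        rw [hEfin, Finset.mem_coe, Set.Finite.mem_toFinset, SimpleGraph.Subgraph.mem_edgeSet] at hx
        have hCadj := hmap (H'.adj_sub hx)
        rw [clientGraph, SimpleGraph.fromEdgeSet_adj] at hCadj
        have hmemC : s(f a, f b) ∈ C := hCadj.1
        have hmemS : Sym2.map f s(a, b) ∈ S.sym2 := by
          rw [Sym2.map_pair_eq, Finset.mem_sym2_iff]
          intro v hv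
          rw [Sym2.mem_iff] at hv
          rcases hv with rfl | rfl
          · exact Finset.mem_image_of_mem f (by
              rw [hTfin, Set.Finite.mem_toFinset]; exact H'.edge_vert hx)
          · exact Finset.mem_image_of_mem f (by
              rw [hTfin, Set.Finite.mem_toFinset]; exact H'.edge_vert hx.symm)
        exact Finset.mem_filter.mpr ⟨by rwa [Sym2.map_pair_eq], hmemS⟩
    · exact (Sym2.map.injective finj).injOn
  have hfin := hC S hS2
  rw [hScard] at hfin
  have : 2 * k * (H'.verts.ncard - 1) = 2 * (k * (H'.verts.ncard - 1)) := by ring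
  omega


lemma waiter_main (k : ℕ) (P : Finset (Sym2 V) → Prop)
    (hP : ∀ C : Finset (Sym2 V),
      (∀ S : Finset V, 2 ≤ S.card → 2 * cnt C S ≤ 2 * k * (S.card - 1)) → P C) :
    ∀ (fuel : ℕ) (C F : Finset (Sym2 V)), F.card ≤ fuel →
      (∀ e ∈ F, ¬ e.IsDiag) → Inv k C F → WaiterCanAux 1 P fuel C F := by
  intro fuel
  induction fuel with
  | zero =>
    intro C F hcard hnd hI
    have hF : F = ∅ := Finset.card_eq_zero.mp (Nat.le_zero.mp hcard)
    subst hF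
    exact ⟨rfl, hP C (fun S hS => by have := hI S hS; simpa [cnt] using this)⟩
  | succ n ih =>
    intro C F hcard hnd hI
    rw [WaiterCanAux]
    by_cases hF : F = ∅
    · rw [if_pos hF]
      subst hF
      exact hP C (fun S hS => by have := hI S hS; simpa [cnt] using this)
    rw [if_neg hF]
    classical
    set TS := Finset.univ.filter (fun S : Finset V => 2 ≤ S.card ∧
      2 * cnt C S + cnt F S = 2 * k * (S.card - 1) ∧
      (F.filter (· ∈ S.sym2)).Nonempty) with hTSdef
    have hmemTS_iff : ∀ S : Finset V, S ∈ TS ↔ (2 ≤ S.card ∧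
        2 * cnt C S + cnt F S = 2 * k * (S.card - 1) ∧
        (F.filter (· ∈ S.sym2)).Nonempty) := by
      intro S
      simp [hTSdef]
    -- common tail: given an offer and the key facts, conclude
    have step : ∀ e y : Sym2 V, e ∈ F → y ∈ F →
        (∀ S : Finset V, 2 ≤ S.card →
          2 * cnt C S + cnt F S = 2 * k * (S.card - 1) → e ∈ S.sym2 → y ∈ S.sym2 ∧ y ≠ e) →
        (∀ S : Finset V, 2 ≤ S.card →
          2 * cnt C S + cnt F S = 2 * k * (S.card - 1) → y ∈ S.sym2 → e ∈ S.sym2 ∧ e ≠ y) →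
        ∃ O ⊆ F, O.Nonempty ∧ O.card ≤ 1 + 1 ∧
          ∀ x ∈ O, WaiterCanAux 1 P n (insert x C) (F \ O) := by
      intro e y he hy key1 key2
      have hOF : ({e, y} : Finset (Sym2 V)) ⊆ F := by
        intro x hx
        rcases Finset.mem_insert.mp hx with rfl | hx
        · exact he
        · rw [Finset.mem_singleton.mp hx]; exact hy
      refine ⟨{e, y}, hOF, ⟨e, Finset.mem_insert_self _ _⟩, ?_, ?_⟩
      · calc ({e, y} : Finset (Sym2 V)).card ≤ ({y} : Finset (Sym2 V)).card + 1 :=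
            Finset.card_insert_le _ _
        _ ≤ 1 + 1 := by simp
      · have hfsub : F \ {e, y} ⊆ F := Finset.sdiff_subset
        have hcard' : (F \ ({e, y} : Finset (Sym2 V))).card ≤ n := by
          have h1 := Finset.card_sdiff_of_subset hOF
          have h2 : 1 ≤ ({e, y} : Finset (Sym2 V)).card :=
            Finset.card_pos.mpr ⟨e, Finset.mem_insert_self _ _⟩
          omega
        intro x hx
        have hnd' : ∀ z ∈ F \ ({e, y} : Finset (Sym2 V)), ¬ z.IsDiag :=
          fun z hz => hnd z (hfsub hz)
        rcases Finset.mem_insert.mp hx with rfl | hx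
        · exact ih (insert x C) _ hcard' hnd' (inv_step he hy hI key1)
        · rw [Finset.mem_singleton.mp hx]
          have := inv_step hy he hI key2
          rw [Finset.pair_comm y e] at this
          exact ih (insert y C) _ hcard' hnd' this
    by_cases hTS : TS.Nonempty
    · obtain ⟨T, hTmem, hTmin⟩ := Finset.exists_min_image TS Finset.card hTS
      obtain ⟨hT2, hTtight, hTne⟩ := (hmemTS_iff T).mp hTmem
      have hfT2 : 2 ≤ (F.filter (· ∈ T.sym2)).card := by
        have h1 : 1 ≤ (F.filter (· ∈ T.sym2)).card := Finset.card_pos.mpr hTne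
        have h2 : 2 * cnt C T + cnt F T = 2 * (k * (T.card - 1)) := by
          rw [hTtight]; ring
        unfold cnt at h2
        omega
      obtain ⟨e, he, y, hy, hey⟩ := Finset.one_lt_card.mp hfT2
      have key : ∀ u v : Sym2 V, u ∈ F.filter (· ∈ T.sym2) → v ∈ F.filter (· ∈ T.sym2) →
          v ≠ u → ∀ S : Finset V, 2 ≤ S.card →
          2 * cnt C S + cnt F S = 2 * k * (S.card - 1) → u ∈ S.sym2 → v ∈ S.sym2 ∧ v ≠ u := by
        intro u v hu hv hvu S hS2 hSt huS
        refine ⟨?_, hvu⟩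
        rw [Finset.mem_filter] at hu hv
        have huIT : u ∈ (S ∩ T).sym2 := by
          rw [Finset.mem_sym2_iff] at huS hu ⊢
          exact fun a ha => Finset.mem_inter.mpr ⟨huS a ha, hu.2 a ha⟩
        have hu2 : 2 ≤ (S ∩ T).card := two_le_card_of_mem_sym2 huIT (hnd u hu.1)
        have hun : 2 ≤ (S ∪ T).card :=
          le_trans hS2 (Finset.card_le_card Finset.subset_union_left)
        have hC5 := cnt_supermod C S T
        have hF6 := cnt_supermod F S T
        have hI3 := hI _ hu2
        have hI4 := hI _ hun
        have h7 := Finset.card_inter_add_card_union S T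
        have hRadd : 2 * k * (S.card - 1) + 2 * k * (T.card - 1)
            = 2 * k * ((S ∩ T).card - 1) + 2 * k * ((S ∪ T).card - 1) := by
          rw [← Nat.mul_add, ← Nat.mul_add]
          congr 1
          omega
        have htint : 2 * cnt C (S ∩ T) + cnt F (S ∩ T) = 2 * k * ((S ∩ T).card - 1) := by
          set R1 := 2 * k * (S.card - 1)
          set R2 := 2 * k * (T.card - 1)
          set R3 := 2 * k * ((S ∩ T).card - 1)
          set R4 := 2 * k * ((S ∪ T).card - 1)
          omega
        have hmem2 : (S ∩ T) ∈ TS := (hmemTS_iff _).mpr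
          ⟨hu2, htint, ⟨u, Finset.mem_filter.mpr ⟨hu.1, huIT⟩⟩⟩
        have hTsubS : T ⊆ S := by
          have hle := hTmin _ hmem2
          have heq := Finset.eq_of_subset_of_card_le Finset.inter_subset_right hle
          intro x hx
          have : x ∈ S ∩ T := by rw [heq]; exact hx
          exact (Finset.mem_inter.mp this).1
        exact Finset.sym2_mono hTsubS hv.2
      exact step e y (Finset.mem_filter.mp he).1 (Finset.mem_filter.mp hy).1
        (key e y he hy (Ne.symm hey)) (key y e hy he hey)
    · obtain ⟨e, he⟩ := Finset.nonempty_iff_ne_empty.mpr hF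
      have key : ∀ S : Finset V, 2 ≤ S.card →
          2 * cnt C S + cnt F S = 2 * k * (S.card - 1) → e ∈ S.sym2 → e ∈ S.sym2 ∧ e ≠ e := by
        intro S hS2 htight heS
        exact absurd ⟨S, (hmemTS_iff S).mpr ⟨hS2, htight,
          ⟨e, Finset.mem_filter.mpr ⟨he, heS⟩⟩⟩⟩ hTS
      have h := step e e he he key key
      simpa using h

end CWaux
end CWauxSection

/-- Lemma 8: if `⌈ar(G)/2⌉ < ar(H)` then Waiter has a winning strategy for the
`CW(G, H, 1)` game. -/
theorem stmt17 {β V : Type*} [Fintype β] [Fintype V] [DecidableEq V]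
    (H : SimpleGraph β) (G : SimpleGraph V) [DecidableRel G.Adj]
    (hH : H.edgeSet.Nonempty)
    (har : (⌈arboricity G / 2⌉ : ℝ) < arboricity H) :
    WaiterCanForce G.edgeFinset 1 (fun C => ¬ ContainsCopy H (clientGraph C)) := by
  classical
  have harG0 : 0 ≤ arboricity G := CWaux.arboricity_nonneg G
  have hceil0 : 0 ≤ ⌈arboricity G / 2⌉ := Int.ceil_nonneg (by linarith)
  set k : ℕ := (⌈arboricity G / 2⌉).toNat with hk
  have hkR : (k : ℝ) = (⌈arboricity G / 2⌉ : ℝ) := by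
    have := Int.toNat_of_nonneg hceil0
    rw [hk]
    exact_mod_cast congrArg (fun z : ℤ => (z : ℝ)) this
  have harG2k : arboricity G ≤ 2 * (k : ℝ) := by
    have h := Int.le_ceil (arboricity G / 2)
    rw [hkR]
    push_cast at h ⊢
    linarith
  have hboard : CWaux.Inv k ∅ G.edgeFinset := by
    intro S hS
    have := CWaux.board_bound G harG2k S hS
    simpa [CWaux.cnt] using this
  have hklt : (k : ℝ) < arboricity H := by rw [hkR]; exact har
  have hne : Set.Nonempty {x : ℝ | ∃ H' : H.Subgraph, 2 ≤ H'.verts.ncard ∧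
      x = (H'.edgeSet.ncard : ℝ) / ((H'.verts.ncard : ℝ) - 1)} := by
    by_contra hcon
    rw [Set.not_nonempty_iff_eq_empty] at hcon
    have h0 : arboricity H = 0 := by unfold arboricity; rw [hcon, Real.sSup_empty]
    have h1 : (0 : ℝ) ≤ (k : ℝ) := by positivity
    rw [h0] at hklt
    linarith
  have hklt' : (k : ℝ) < sSup {x : ℝ | ∃ H' : H.Subgraph, 2 ≤ H'.verts.ncard ∧
      x = (H'.edgeSet.ncard : ℝ) / ((H'.verts.ncard : ℝ) - 1)} := hklt
  obtain ⟨x, hxmem, hxk⟩ := exists_lt_of_lt_csSup hne hklt'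
  obtain ⟨H', hH2, rfl⟩ := hxmem
  have hnlt : k * (H'.verts.ncard - 1) < H'.edgeSet.ncard := by
    have hv : (2 : ℝ) ≤ (H'.verts.ncard : ℝ) := by exact_mod_cast hH2
    have h := (lt_div_iff₀ (by linarith : (0:ℝ) < (H'.verts.ncard : ℝ) - 1)).mp hxk
    have hcast : ((k * (H'.verts.ncard - 1) : ℕ) : ℝ)
        = (k : ℝ) * ((H'.verts.ncard : ℝ) - 1) := by
      push_cast [Nat.cast_sub (by omega : 1 ≤ H'.verts.ncard)]
      ring
    exact_mod_cast hcast ▸ h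
  have hnd : ∀ e ∈ G.edgeFinset, ¬ e.IsDiag := fun e he =>
    G.not_isDiag_of_mem_edgeSet (SimpleGraph.mem_edgeFinset.mp he)
  exact CWaux.waiter_main k _ (fun C hC => CWaux.no_copy H hH2 hnlt C hC)
    G.edgeFinset.card ∅ G.edgeFinset le_rfl hnd hboard
end

section
/- Let G and H be graphs, H having at least one edge, such that ⌈m(G)/2⌉ < m(H), where m denotes the maximum density. Then Waiter has a winning strategy in the H-game CW(G, H, 1), i.e., Waiter can guarantee that at the end of the game Client's graph contains no copy of H. -/
open Finset

variable {α : Type*}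

section Helpers

lemma mem_foldrUnion [DecidableEq α] {L : List (Finset α)} {x : α} :
    x ∈ L.foldr (· ∪ ·) ∅ ↔ ∃ B ∈ L, x ∈ B := by
  induction L with
  | nil => simp
  | cons B L ih => simp [ih]

lemma card_le_length_of_caps [DecidableEq α] {L : List (Finset α)} :
    ∀ S : Finset α, S ⊆ L.foldr (· ∪ ·) ∅ → (∀ B ∈ L, (S ∩ B).card ≤ 1) →
    S.card ≤ L.length := by
  induction L with
  | nil => intro S h _; simpa using Finset.card_le_card h
  | cons B L ih =>
    intro S hsub hcap
    have h1 : S \ B ⊆ L.foldr (· ∪ ·) ∅ := by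
      intro x hx
      rcases Finset.mem_sdiff.mp hx with ⟨hxS, hxB⟩
      have := hsub hxS
      simp only [List.foldr_cons, Finset.mem_union] at this
      tauto
    have h2 := ih (S \ B) h1 (fun B' hB' => le_trans
      (Finset.card_le_card (fun x hx => by
        rcases Finset.mem_inter.mp hx with ⟨hx1, hx2⟩
        exact Finset.mem_inter.mpr ⟨(Finset.mem_sdiff.mp hx1).1, hx2⟩))
      (hcap B' (List.mem_cons_of_mem _ hB')))
    calc S.card = (S ∩ B).card + (S \ B).card := (Finset.card_inter_add_card_sdiff S B).symm
      _ ≤ 1 + L.length := Nat.add_le_add (hcap B (List.mem_cons_self)) h2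
      _ = (B :: L).length := by simp [Nat.add_comm]

lemma exists_pair_partition [DecidableEq α] :
    ∀ (n : ℕ) (F : Finset α), F.card ≤ n →
    ∃ L : List (Finset α), (∀ B ∈ L, B.Nonempty ∧ B.card ≤ 2 ∧ B ⊆ F) ∧
      L.Pairwise Disjoint ∧ L.foldr (· ∪ ·) ∅ = F ∧ 2 * L.length ≤ F.card + 1 := by
  intro n
  induction n with
  | zero =>
    intro F hF
    have : F = ∅ := Finset.card_eq_zero.mp (Nat.le_antisymm hF (Nat.zero_le _))
    exact ⟨[], by simp, by simp, by simp [this], by simp⟩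
  | succ n ih =>
    intro F hF
    rcases Nat.lt_or_ge F.card 2 with h2 | h2
    · rcases Finset.eq_empty_or_nonempty F with rfl | ⟨a, ha⟩
      · exact ⟨[], by simp, by simp, by simp, by simp⟩
      · have hF1 : F = {a} := by
          apply Finset.eq_singleton_iff_unique_mem.mpr
          refine ⟨ha, fun b hb => ?_⟩
          by_contra hne
          have : ({a, b} : Finset α) ⊆ F := by
            intro x hx; rcases Finset.mem_insert.mp hx with rfl | hx
            · exact ha
            · exact (Finset.mem_singleton.mp hx) ▸ hb
          have := Finset.card_le_card this
          rw [Finset.card_pair (Ne.symm hne)] at this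
          omega
        refine ⟨[{a}], ?_, by simp, by simp [hF1], by simp [hF1]⟩
        intro B hB; simp only [List.mem_singleton] at hB
        subst hB; exact ⟨Finset.singleton_nonempty a, by simp, by simp [hF1]⟩
    · obtain ⟨a, ha⟩ : F.Nonempty := Finset.card_pos.mp (by omega)
      obtain ⟨b, hb⟩ : (F.erase a).Nonempty := by
        apply Finset.card_pos.mp
        rw [Finset.card_erase_of_mem ha]; omega
      have hab : a ≠ b := fun h => (Finset.ne_of_mem_erase hb) h.symm
      have hbF : b ∈ F := Finset.mem_of_mem_erase hb
      set F' := F \ {a, b} with hF'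
      have hsub : ({a, b} : Finset α) ⊆ F := by
        intro x hx; rcases Finset.mem_insert.mp hx with rfl | hx
        · exact ha
        · exact (Finset.mem_singleton.mp hx) ▸ hbF
      have hcard' : F'.card = F.card - 2 := by
        rw [hF', Finset.card_sdiff_of_subset hsub, Finset.card_pair hab]
      obtain ⟨L', hB', hdis', hun', hlen'⟩ := ih F' (by omega)
      refine ⟨{a, b} :: L', ?_, ?_, ?_, ?_⟩
      · intro B hB
        rcases List.mem_cons.mp hB with rfl | hB
        · exact ⟨⟨a, by simp⟩, by simpa using Finset.card_insert_le a {b}, hsub⟩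
        · obtain ⟨h1, h2, h3⟩ := hB' B hB
          exact ⟨h1, h2, h3.trans (Finset.sdiff_subset)⟩
      · refine List.pairwise_cons.mpr ⟨?_, hdis'⟩
        intro B hB
        apply Finset.disjoint_left.mpr
        intro x hx hxB
        have := (hB' B hB).2.2 hxB
        rw [hF'] at this
        exact (Finset.mem_sdiff.mp this).2 hx
      · simp only [List.foldr_cons, hun', hF']
        rw [Finset.union_comm, Finset.sdiff_union_of_subset hsub]
      · simp only [List.length_cons]
        omega

lemma waiter_strategy [DecidableEq α] {q : ℕ} {P : Finset α → Prop} :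
    ∀ (fuel : ℕ) (C F : Finset α) (L : List (Finset α)),
    F.card ≤ fuel →
    (∀ B ∈ L, B.Nonempty ∧ B.card ≤ q + 1) →
    L.Pairwise Disjoint →
    L.foldr (· ∪ ·) ∅ = F →
    (∀ T ⊆ F, (∀ B ∈ L, (T ∩ B).card ≤ 1) → P (C ∪ T)) →
    WaiterCanAux q P fuel C F := by
  intro fuel
  induction fuel with
  | zero =>
    intro C F L hfc _ _ _ hP
    have hF : F = ∅ := Finset.card_eq_zero.mp (Nat.le_antisymm hfc (Nat.zero_le _))
    exact ⟨hF, by simpa using hP ∅ (by simp) (by simp)⟩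
  | succ n ih =>
    intro C F L hfc hblocks hdisj hunion hP
    show if F = ∅ then P C else _
    by_cases hF : F = ∅
    · rw [if_pos hF]
      simpa using hP ∅ (by simp) (by simp)
    · rw [if_neg hF]
      cases L with
      | nil =>
        exact absurd hunion.symm (by simpa using hF)
      | cons B L' =>
        obtain ⟨hBne, hBcard⟩ := hblocks B (List.mem_cons_self)
        have hBF : B ⊆ F := by
          intro x hx
          rw [← hunion]
          exact mem_foldrUnion.mpr ⟨B, List.mem_cons_self, hx⟩
        have hdishead : ∀ B' ∈ L', Disjoint B B' := (List.pairwise_cons.mp hdisj).1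
        refine ⟨B, hBF, hBne, hBcard, ?_⟩
        intro x hx
        apply ih (insert x C) (F \ B) L'
        · rw [Finset.card_sdiff_of_subset hBF]
          have : 1 ≤ B.card := Finset.card_pos.mpr hBne
          omega
        · exact fun B' hB' => hblocks B' (List.mem_cons_of_mem _ hB')
        · exact (List.pairwise_cons.mp hdisj).2
        · ext y
          rw [mem_foldrUnion, Finset.mem_sdiff, ← hunion]
          constructor
          · rintro ⟨B', hB', hy⟩
            refine ⟨mem_foldrUnion.mpr ⟨B', List.mem_cons_of_mem _ hB', hy⟩, ?_⟩
            exact fun hyB => Finset.disjoint_left.mp (hdishead B' hB') hyB hy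
          · rintro ⟨hy, hyB⟩
            rcases mem_foldrUnion.mp hy with ⟨B', hB', hyB'⟩
            rcases List.mem_cons.mp hB' with rfl | hB'
            · exact absurd hyB' hyB
            · exact ⟨B', hB', hyB'⟩
        · intro T hT hcaps
          have hres : C ∪ insert x T = insert x C ∪ T := by
            ext y; simp only [Finset.mem_union, Finset.mem_insert]; tauto
          rw [← hres]
          apply hP (insert x T)
          · intro y hy
            rcases Finset.mem_insert.mp hy with rfl | hy
            · exact hBF hx
            · exact (Finset.mem_sdiff.mp (hT hy)).1
          · intro B' hB'
            rcases List.mem_cons.mp hB' with rfl | hB'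
            · apply le_trans (Finset.card_le_card (t := {x}) ?_) (by simp)
              intro y hy
              rcases Finset.mem_inter.mp hy with ⟨hy1, hy2⟩
              rcases Finset.mem_insert.mp hy1 with rfl | hy1
              · simp
              · exact absurd hy2 (Finset.mem_sdiff.mp (hT hy1)).2
            · have hxB' : x ∉ B' := fun h => Finset.disjoint_left.mp (hdishead B' hB') hx h
              refine le_trans (Finset.card_le_card ?_) (hcaps B' hB')
              intro y hy
              rcases Finset.mem_inter.mp hy with ⟨hy1, hy2⟩
              rcases Finset.mem_insert.mp hy1 with rfl | hy1
              · exact absurd hy2 hxB'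
              · exact Finset.mem_inter.mpr ⟨hy1, hy2⟩

lemma edge_count_bound {V : Type*} [Fintype V] [DecidableEq V]
    (G : SimpleGraph V) [DecidableRel G.Adj] (d : ℕ)
    (hb : ∀ G' : G.Subgraph, G'.verts.Nonempty →
      (G'.edgeSet.ncard : ℝ) / (G'.verts.ncard : ℝ) ≤ (d : ℝ))
    (S : Finset (Sym2 V)) (hSsub : S ⊆ G.edgeFinset) :
    S.card ≤ d * (S.biUnion (fun e => Finset.univ.filter (· ∈ e))).card := by
  classical
  set T : Finset V := S.biUnion (fun e => Finset.univ.filter (· ∈ e)) with hT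
  rcases Finset.eq_empty_or_nonempty S with hSe | hSne
  · simp [hSe]
  have hadj : ∀ {a b : V}, s(a,b) ∈ S → G.Adj a b := fun {a b} h =>
    (SimpleGraph.mem_edgeSet G).mp (SimpleGraph.mem_edgeFinset.mp (hSsub h))
  have hev : ∀ {a b : V}, s(a,b) ∈ S → a ∈ (↑T : Set V) := by
    intro a b h
    simp only [Finset.mem_coe, hT, Finset.mem_biUnion, Finset.mem_filter, Finset.mem_univ,
      true_and]
    exact ⟨s(a,b), h, Sym2.mem_mk_left a b⟩
  let G' : G.Subgraph :=
    { verts := ↑T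
      Adj := fun a b => s(a,b) ∈ S
      adj_sub := fun h => hadj h
      edge_vert := fun h => hev h
      symm := ⟨fun a b h => by
        show s(b,a) ∈ S
        have h' : s(a,b) ∈ S := h
        rwa [Sym2.eq_swap] at h'⟩ }
  have hedge : G'.edgeSet = ↑S := by
    ext e
    induction e using Sym2.ind with
    | _ x y => exact SimpleGraph.Subgraph.mem_edgeSet
  obtain ⟨e, heS⟩ := hSne
  have hverts : G'.verts.Nonempty := by
    induction e using Sym2.ind with
    | _ x y => exact ⟨x, hev heS⟩
  have hvcard : G'.verts.ncard = T.card := Set.ncard_coe_finset T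
  have hecard : G'.edgeSet.ncard = S.card := by rw [hedge]; exact Set.ncard_coe_finset S
  have hTpos : 0 < T.card := by
    rcases hverts with ⟨x, hx⟩
    exact Finset.card_pos.mpr ⟨x, hx⟩
  have hd := hb G' hverts
  rw [hvcard, hecard] at hd
  have h2 : (S.card : ℝ) ≤ (d : ℝ) * (T.card : ℝ) := by
    rw [div_le_iff₀ (by positivity)] at hd
    linarith
  exact_mod_cast h2

lemma exists_orientation {V : Type*} [Fintype V] [DecidableEq V] [Nonempty V]
    (G : SimpleGraph V) [DecidableRel G.Adj] (d : ℕ)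
    (hb : ∀ G' : G.Subgraph, G'.verts.Nonempty →
      (G'.edgeSet.ncard : ℝ) / (G'.verts.ncard : ℝ) ≤ (d : ℝ)) :
    ∃ head : Sym2 V → V, (∀ e ∈ G.edgeFinset, head e ∈ e) ∧
      ∀ v : V, (G.edgeFinset.filter (fun e => head e = v)).card ≤ d := by
  classical
  set ι := {e : Sym2 V // e ∈ G.edgeFinset}
  set t : ι → Finset (V × Fin d) :=
    fun e => (Finset.univ.filter (· ∈ e.val)) ×ˢ (Finset.univ : Finset (Fin d)) with ht
  have hall : ∀ s : Finset ι, s.card ≤ (s.biUnion t).card := by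
    intro s
    set S : Finset (Sym2 V) := s.image Subtype.val with hS
    set T : Finset V := S.biUnion (fun e => Finset.univ.filter (· ∈ e)) with hT
    have hbi : s.biUnion t = T ×ˢ (Finset.univ : Finset (Fin d)) := by
      ext ⟨v, i⟩
      simp only [ht, hT, hS, Finset.mem_biUnion, Finset.mem_product, Finset.mem_image,
        Finset.mem_filter, Finset.mem_univ, true_and, and_true]
      constructor
      · rintro ⟨⟨a, ha⟩, has, hv⟩
        exact ⟨a, ⟨⟨a, ha⟩, has, rfl⟩, hv⟩
      · rintro ⟨a, ⟨⟨a', ha'⟩, has, rfl⟩, hv⟩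
        exact ⟨⟨a', ha'⟩, has, hv⟩
    have hScard : S.card = s.card := Finset.card_image_of_injective s Subtype.val_injective
    have hkey : S.card ≤ d * T.card := by
      rw [hT]
      apply edge_count_bound G d hb S
      intro e he
      rcases Finset.mem_image.mp (hS ▸ he) with ⟨el, _, rfl⟩
      exact el.2
    rw [hbi, Finset.card_product, ← hScard, Finset.card_univ, Fintype.card_fin]
    exact hkey.trans (by rw [Nat.mul_comm])
  obtain ⟨f, hfinj, hft⟩ := (Finset.all_card_le_biUnion_card_iff_exists_injective t).mp hall
  set head : Sym2 V → V :=
    fun e => if h : e ∈ G.edgeFinset then (f ⟨e, h⟩).1 else Classical.arbitrary V with hhead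
  have hmem : ∀ (e : Sym2 V) (h : e ∈ G.edgeFinset), head e = (f ⟨e, h⟩).1 :=
    fun e h => dif_pos h
  refine ⟨head, ?_, ?_⟩
  · intro e he
    rw [hmem e he]
    have := hft ⟨e, he⟩
    rw [ht] at this
    have := (Finset.mem_product.mp this).1
    simpa using this
  · intro v
    set sv : Finset ι := Finset.univ.filter (fun e : ι => (f e).1 = v) with hsv
    have h1 : G.edgeFinset.filter (fun e => head e = v) = sv.image Subtype.val := by
      ext e
      simp only [Finset.mem_filter, Finset.mem_image, hsv, Finset.mem_univ, true_and]
      constructor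
      · rintro ⟨he, hv⟩
        exact ⟨⟨e, he⟩, by rw [← hmem e he]; exact hv, rfl⟩
      · rintro ⟨⟨e', he'⟩, hv, rfl⟩
        exact ⟨he', by rw [hmem _ he']; exact hv⟩
    rw [h1, Finset.card_image_of_injective _ Subtype.val_injective]
    have h2 : sv.card ≤ (Finset.univ : Finset (Fin d)).card :=
      Finset.card_le_card_of_injOn (fun e => (f e).2)
        (fun _ _ => Finset.mem_univ _)
        (by
          intro a ha b hb' hab
          simp only [hsv, Finset.mem_coe, Finset.mem_filter] at ha hb'
          apply hfinj
          apply Prod.ext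
          · rw [ha.2, hb'.2]
          · exact hab)
    simpa using h2

lemma subgraph_finite {β : Type*} [Finite β] (G : SimpleGraph β) : Finite G.Subgraph := by
  classical
  have hinj : Function.Injective
      (fun G' : G.Subgraph => (G'.verts, {p : β × β | G'.Adj p.1 p.2})) := by
    intro a b h
    simp only [Prod.mk.injEq] at h
    ext x y
    · exact Set.ext_iff.mp h.1 _
    · exact Iff.of_eq (congrArg (fun s => (x, y) ∈ s) h.2)
  exact Finite.of_injective _ hinj

lemma densSet_finite {β : Type*} [Finite β] (G : SimpleGraph β) :
    {x : ℝ | ∃ G' : G.Subgraph, G'.verts.Nonempty ∧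
      x = (G'.edgeSet.ncard : ℝ) / (G'.verts.ncard : ℝ)}.Finite := by
  haveI := subgraph_finite G
  apply Set.Finite.subset (Set.finite_range
    (fun G' : G.Subgraph => (G'.edgeSet.ncard : ℝ) / (G'.verts.ncard : ℝ)))
  rintro x ⟨G', _, rfl⟩
  exact ⟨G', rfl⟩

lemma zero_mem_densSet {β : Type*} (G : SimpleGraph β) (b : β) :
    (0 : ℝ) ∈ {x : ℝ | ∃ G' : G.Subgraph, G'.verts.Nonempty ∧
      x = (G'.edgeSet.ncard : ℝ) / (G'.verts.ncard : ℝ)} := by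
  refine ⟨G.singletonSubgraph b, ⟨b, rfl⟩, ?_⟩
  rw [SimpleGraph.edgeSet_singletonSubgraph]
  simp [SimpleGraph.singletonSubgraph]

lemma no_copy {β V : Type*} [Fintype β] [Fintype V] [DecidableEq V]
    (H : SimpleGraph β) (G : SimpleGraph V) [DecidableRel G.Adj]
    (k : ℕ) (hkH : (k : ℝ) < maxDensity H) (b0 : β)
    (head : Sym2 V → V) (hhm : ∀ e ∈ G.edgeFinset, head e ∈ e)
    (T : Finset (Sym2 V)) (hTsub : T ⊆ G.edgeFinset)
    (hcount : ∀ v : V, (T.filter (fun e => head e = v)).card ≤ k) :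
    ¬ ContainsCopy H (clientGraph T) := by
  classical
  have hfin := densSet_finite H
  have hmem : maxDensity H ∈ {x : ℝ | ∃ H' : H.Subgraph, H'.verts.Nonempty ∧
      x = (H'.edgeSet.ncard : ℝ) / (H'.verts.ncard : ℝ)} :=
    Set.Nonempty.csSup_mem ⟨0, zero_mem_densSet H b0⟩ hfin
  obtain ⟨H', hne, heq⟩ := hmem
  rw [heq] at hkH
  rintro ⟨f, finj, hmap⟩
  have himg : ∀ e ∈ H'.edgeSet, Sym2.map f e ∈ T := by
    intro e he
    induction e using Sym2.ind with
    | _ a b =>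
      have hadj : H'.Adj a b := SimpleGraph.Subgraph.mem_edgeSet.mp he
      have h2 := hmap (H'.adj_sub hadj)
      rw [clientGraph, SimpleGraph.fromEdgeSet_adj] at h2
      simpa using h2.1
  set Wfin : Finset V := ((Set.toFinite H'.verts).toFinset).image f with hW
  set D : Finset (Sym2 V) := T.filter (fun e => e ∈ Sym2.map f '' H'.edgeSet) with hD
  have himg2 : Sym2.map f '' H'.edgeSet = ↑D := by
    ext e
    constructor
    · rintro ⟨e', he', rfl⟩
      exact Finset.mem_coe.mpr (Finset.mem_filter.mpr ⟨himg e' he', ⟨e', he', rfl⟩⟩)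
    · intro he
      exact (Finset.mem_filter.mp (Finset.mem_coe.mp he)).2
  have hecard : H'.edgeSet.ncard = D.card := by
    rw [← Set.ncard_coe_finset, ← himg2,
      Set.ncard_image_of_injective _ (Sym2.map.injective finj)]
  have hvcard : H'.verts.ncard = Wfin.card := by
    rw [hW, Finset.card_image_of_injOn (fun x _ y _ h => finj h)]
    exact Set.ncard_eq_toFinset_card _ _
  have hDhead : ∀ e ∈ D, head e ∈ Wfin := by
    intro e he
    rcases Finset.mem_filter.mp he with ⟨heT, himg'⟩
    rcases himg' with ⟨e', he', rfl⟩
    induction e' using Sym2.ind with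
    | _ a b =>
      have hadj : H'.Adj a b := SimpleGraph.Subgraph.mem_edgeSet.mp he'
      have haa : a ∈ H'.verts := H'.edge_vert hadj
      have hbb : b ∈ H'.verts := H'.edge_vert hadj.symm
      have hmm := hhm _ (hTsub heT)
      rw [Sym2.map_pair_eq, Sym2.mem_iff] at hmm
      rcases hmm with h | h <;> rw [Sym2.map_pair_eq, h] <;>
        exact Finset.mem_image.mpr ⟨_, (Set.Finite.mem_toFinset _).mpr (by assumption), rfl⟩
  have hsum : D.card = ∑ w ∈ Wfin, (D.filter (fun e => head e = w)).card :=
    Finset.card_eq_sum_card_fiberwise hDhead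
  have hbound : D.card ≤ k * Wfin.card := by
    rw [hsum]
    calc ∑ w ∈ Wfin, (D.filter (fun e => head e = w)).card
        ≤ ∑ _w ∈ Wfin, k := by
          apply Finset.sum_le_sum
          intro w _
          refine le_trans (Finset.card_le_card ?_) (hcount w)
          intro e he
          rcases Finset.mem_filter.mp he with ⟨heD, hev⟩
          exact Finset.mem_filter.mpr ⟨(Finset.mem_filter.mp heD).1, hev⟩
      _ = k * Wfin.card := by rw [Finset.sum_const, smul_eq_mul, Nat.mul_comm]
  have hvpos : 0 < H'.verts.ncard := (Set.ncard_pos (Set.toFinite _)).mpr hne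
  have hlt : (k : ℝ) * (H'.verts.ncard : ℝ) < (H'.edgeSet.ncard : ℝ) := by
    rw [lt_div_iff₀ (by positivity)] at hkH
    linarith
  have hc : k * H'.verts.ncard < H'.edgeSet.ncard := by exact_mod_cast hlt
  rw [hecard, hvcard] at hc
  omega

end Helpers


/-- Lemma 9: if `⌈m(G)/2⌉ < m(H)` then Waiter has a winning strategy for the
`CW(G, H, 1)` game. -/
theorem stmt18 {β V : Type*} [Fintype β] [Fintype V] [DecidableEq V]
    (H : SimpleGraph β) (G : SimpleGraph V) [DecidableRel G.Adj]
    (hH : H.edgeSet.Nonempty)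
    (hm : (⌈maxDensity G / 2⌉ : ℝ) < maxDensity H) :
    WaiterCanForce G.edgeFinset 1 (fun C => ¬ ContainsCopy H (clientGraph C)) := by
  classical
  obtain ⟨eH, heH⟩ := hH
  have hb0 : Nonempty β := by
    induction eH using Sym2.ind with
    | _ a b => exact ⟨a⟩
  obtain ⟨b0⟩ := hb0
  show WaiterCanAux 1 _ G.edgeFinset.card ∅ G.edgeFinset
  rcases Finset.eq_empty_or_nonempty G.edgeFinset with hGE | ⟨e0, he0⟩
  · apply waiter_strategy _ _ _ []
    · exact le_rfl
    · simp
    · simp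
    · simp [hGE]
    · intro T hT _
      have hTe : T = ∅ := Finset.subset_empty.mp (hGE ▸ hT)
      subst hTe
      rw [Finset.union_empty]
      rintro ⟨f, finj, hmap⟩
      induction eH using Sym2.ind with
      | _ a b =>
        have hadj : H.Adj a b := (SimpleGraph.mem_edgeSet H).mp heH
        have h2 := hmap hadj
        rw [clientGraph, SimpleGraph.fromEdgeSet_adj] at h2
        simpa using h2.1
  · have hNV : Nonempty V := by
      induction e0 using Sym2.ind with
      | _ a b => exact ⟨a⟩
    haveI := hNV
    set kZ := ⌈maxDensity G / 2⌉ with hkZdef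
    have h0G : (0 : ℝ) ≤ maxDensity G :=
      le_csSup (densSet_finite G).bddAbove (zero_mem_densSet G (Classical.arbitrary V))
    have hkZ0 : 0 ≤ kZ := Int.ceil_nonneg (by positivity)
    set k := kZ.toNat with hk
    have hkR : (k : ℝ) = (kZ : ℝ) := by
      rw [hk]
      exact_mod_cast congrArg (fun z : ℤ => (z : ℝ)) (Int.toNat_of_nonneg hkZ0)
    have hkH : (k : ℝ) < maxDensity H := by rw [hkR]; exact hm
    have hGd : ∀ G' : G.Subgraph, G'.verts.Nonempty →
        (G'.edgeSet.ncard : ℝ) / (G'.verts.ncard : ℝ) ≤ ((2 * k : ℕ) : ℝ) := by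
      intro G' h
      have h1 : (G'.edgeSet.ncard : ℝ) / (G'.verts.ncard : ℝ) ≤ maxDensity G :=
        le_csSup (densSet_finite G).bddAbove ⟨G', h, rfl⟩
      have h2 : maxDensity G / 2 ≤ (kZ : ℝ) := Int.le_ceil _
      push_cast
      rw [hkR]
      linarith
    obtain ⟨head, hhm', hhc⟩ := exists_orientation G (2 * k) hGd
    have hpp := fun v : V =>
      exists_pair_partition (G.edgeFinset.filter (fun e => head e = v)).card
        (G.edgeFinset.filter (fun e => head e = v)) le_rfl
    choose Lv hLB hLdis hLun hLlen using hpp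
    have hLvlen : ∀ v, (Lv v).length ≤ k := by
      intro v
      have h1 := hLlen v
      have h2 := hhc v
      omega
    set L : List (Finset (Sym2 V)) := (Finset.univ.toList.map Lv).flatten with hL
    have hmemL : ∀ v : V, ∀ B ∈ Lv v, B ∈ L := by
      intro v B hB
      rw [hL, List.mem_flatten]
      exact ⟨Lv v, List.mem_map.mpr ⟨v, Finset.mem_toList.mpr (Finset.mem_univ _), rfl⟩, hB⟩
    apply waiter_strategy _ _ _ L
    · exact le_rfl
    · intro B hB
      rw [hL, List.mem_flatten] at hB
      rcases hB with ⟨l, hl, hBl⟩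
      rcases List.mem_map.mp hl with ⟨v, _, rfl⟩
      exact ⟨(hLB v B hBl).1, (hLB v B hBl).2.1⟩
    · rw [hL]
      apply List.pairwise_flatten.mpr
      constructor
      · intro l hl
        rcases List.mem_map.mp hl with ⟨v, _, rfl⟩
        exact hLdis v
      · apply List.pairwise_map.mpr
        apply List.Pairwise.imp ?_ (Finset.nodup_toList (Finset.univ : Finset V))
        intro v w hvw B hB B' hB'
        apply Finset.disjoint_left.mpr
        intro x hx hx'
        have h1 := (hLB v B hB).2.2 hx
        have h2 := (hLB w B' hB').2.2 hx'
        exact hvw ((Finset.mem_filter.mp h1).2.symm.trans (Finset.mem_filter.mp h2).2)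
    · ext x
      rw [mem_foldrUnion]
      constructor
      · rintro ⟨B, hB, hx⟩
        rw [hL, List.mem_flatten] at hB
        rcases hB with ⟨l, hl, hBl⟩
        rcases List.mem_map.mp hl with ⟨v, _, rfl⟩
        exact Finset.mem_of_mem_filter x ((hLB v B hBl).2.2 hx)
      · intro hx
        have hxf : x ∈ G.edgeFinset.filter (fun e => head e = head x) :=
          Finset.mem_filter.mpr ⟨hx, rfl⟩
        rw [← hLun (head x)] at hxf
        rcases mem_foldrUnion.mp hxf with ⟨B, hB, hxB⟩
        exact ⟨B, hmemL _ B hB, hxB⟩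
    · intro T hT hcaps
      rw [Finset.empty_union]
      apply no_copy H G k hkH b0 head hhm' T hT
      intro v
      refine le_trans (card_le_length_of_caps (T.filter (fun e => head e = v)) ?_ ?_)
        (hLvlen v)
      · rw [hLun v]
        intro x hx
        rcases Finset.mem_filter.mp hx with ⟨hxT, hxv⟩
        exact Finset.mem_filter.mpr ⟨hT hxT, hxv⟩
      · intro B hB
        refine le_trans (Finset.card_le_card ?_) (hcaps B (hmemL v B hB))
        exact Finset.inter_subset_inter (Finset.filter_subset _ _) le_rfl
end
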